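/- arXiv:0809.3131 — 11 statements merged into one kernel-verified Lean document; each statement's English description precedes it below -/
import Mathlib

section
/- Let α₁, ..., αₙ (n ≥ 2) be the roots of a monic irreducible polynomial p ∈ ℤ[x] of degree n with constant term (-1)^n, none of which is a root of unity. If exactly one root, say α₁, has modulus greater than one (so α₁ > 1 > |α₂| ≥ ... ≥ |αₙ| after reordering), then the only integer solutions (d₁,...,dₙ) to α₁^{d₁} · α₂^{d₂} ⋯ αₙ^{dₙ} = 1 are those with d₁ = d₂ = ⋯ = dₙ. -/
open Polynomial

/-- If `p ∈ ℤ[x]` is monic irreducible of degree `n ≥ 2` with constant term `(-1)^n`,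
none of its roots is a root of unity, and exactly one root `α j₀` has modulus
greater than one (that root being real and `> 1`), while all other roots have
modulus less than one, then the only integer solutions of
`∏ αᵢ^{dᵢ} = 1` are constant tuples. -/
theorem stmt_1 (n : ℕ) (hn : 2 ≤ n) (p : Polynomial ℤ) (hmonic : p.Monic)
    (hirr : Irreducible p) (hdeg : p.natDegree = n)
    (hconst : p.coeff 0 = (-1) ^ n)
    (α : Fin n → ℂ)
    (hroots : p.map (Int.castRingHom ℂ) = ∏ i, (X - C (α i)))
    (hnru : ∀ i, ∀ k : ℕ, 0 < k → α i ^ k ≠ 1)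
    (j₀ : Fin n) (hreal : (α j₀).im = 0) (hbig : 1 < (α j₀).re)
    (hbigabs : 1 < ‖α j₀‖)
    (hsmall : ∀ i, i ≠ j₀ → ‖α i‖ < 1) :
    ∀ d : Fin n → ℤ, (∏ i, α i ^ d i) = 1 → ∀ i j, d i = d j := by
  intro d hd i j
  -- the product of all roots is 1
  have hcast : (p.map (Int.castRingHom ℂ)).coeff 0 = ((-1) ^ n : ℂ) := by
    rw [coeff_map, hconst]; push_cast; ring_nf; simp
  have h0 : (∏ i, (X - C (α i))).coeff 0 = (-1) ^ n * ∏ i, α i := by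
    rw [coeff_zero_eq_eval_zero, eval_prod]
    have hterm : ∀ i : Fin n, (X - C (α i)).eval 0 = -1 * α i := by intro i; simp
    rw [Finset.prod_congr rfl (fun i _ => hterm i), Finset.prod_mul_distrib,
      Finset.prod_const, Finset.card_univ, Fintype.card_fin]
  have hprod1 : ∏ i, α i = 1 := by
    have h1 : ((-1 : ℂ)) ^ n * ∏ i, α i = (-1) ^ n := by rw [← h0, ← hroots, hcast]
    have h2 : ((-1 : ℂ)) ^ n ≠ 0 := by simp
    exact mul_left_cancel₀ h2 (by rw [h1, mul_one])
  have hane : ∀ i, α i ≠ 0 := by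
    intro i hi
    rw [Finset.prod_eq_zero (Finset.mem_univ i) hi] at hprod1
    exact one_ne_zero hprod1.symm
  -- pass to ℚ
  set q : ℚ[X] := p.map (Int.castRingHom ℚ) with hqdef
  have hcomp : (algebraMap ℚ ℂ).comp (Int.castRingHom ℚ) = Int.castRingHom ℂ := by
    ext1; simp
  have hqmap : q.map (algebraMap ℚ ℂ) = ∏ i, (X - C (α i)) := by
    rw [hqdef, map_map, hcomp, hroots]
  have hqmonic : q.Monic := hmonic.map _
  have hq0 : q ≠ 0 := hqmonic.ne_zero
  have hirrq : Irreducible q :=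
    (IsPrimitive.Int.irreducible_iff_irreducible_map_cast hmonic.isPrimitive).mp hirr
  have hsplits : (q.map (algebraMap ℚ ℂ)).Splits := by
    rw [hqmap]
    exact Splits.prod fun i _ => Splits.X_sub_C _
  have hainj : Function.Injective α := by
    have hnd : (q.map (algebraMap ℚ ℂ)).roots.Nodup := nodup_roots (hirrq.separable.map)
    rw [hqmap] at hnd
    have hprodroots : (∏ i, (X - C (α i))).roots = Finset.univ.val.map α := by
      have := roots_multiset_prod_X_sub_C (Finset.univ.val.map α)
      rwa [Multiset.map_map] at this
    rw [hprodroots] at hnd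
    intro a b hab
    exact Multiset.inj_on_of_nodup_map hnd a (Finset.mem_univ_val a) b (Finset.mem_univ_val b) hab
  -- splitting field
  set F := q.SplittingField with hF
  haveI : IsSplittingField ℚ F q := IsSplittingField.splittingField q
  haveI : Normal ℚ F := SplittingField.instNormal q
  set φ : F →ₐ[ℚ] ℂ := IsSplittingField.lift F q hsplits with hφdef
  have hφinj : Function.Injective φ := φ.toRingHom.injective
  set R : Multiset F := (q.map (algebraMap ℚ F)).roots with hR
  have hqF0 : q.map (algebraMap ℚ F) ≠ 0 := map_ne_zero hq0
  have key : R.map φ = Finset.univ.val.map α := by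
    have h1 := Splits.roots_map (IsSplittingField.splits F q) (φ : F →+* ℂ)
    rw [map_map, AlgHom.comp_algebraMap, hqmap] at h1
    have h2 := roots_multiset_prod_X_sub_C (Finset.univ.val.map α)
    rw [Multiset.map_map] at h2
    refine Eq.trans ?_ h2
    have h3 : (∏ i, (X - C (α i))) =
        (Multiset.map ((fun a => X - C a) ∘ α) Finset.univ.val).prod := rfl
    rw [← h3]
    exact h1.symm
  -- roots upstairs
  have hβex : ∀ i : Fin n, ∃ b, b ∈ R ∧ φ b = α i := by
    intro i
    have : α i ∈ R.map φ := by
      rw [key]; exact Multiset.mem_map_of_mem α (Finset.mem_univ_val i)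
    obtain ⟨b, hb, hb2⟩ := Multiset.mem_map.mp this
    exact ⟨b, hb, hb2⟩
  choose β hβR hβφ using hβex
  have hβinj : Function.Injective β := by
    intro a b hab
    exact hainj (by rw [← hβφ a, ← hβφ b, hab])
  have hβroot : ∀ (b : F), b ∈ R → aeval b q = 0 := by
    intro b hb
    have := (mem_roots hqF0).mp hb
    rwa [IsRoot.def, eval_map, ← aeval_def] at this
  have hRrange : ∀ b ∈ R, ∃ i, b = β i := by
    intro b hb
    have : φ b ∈ R.map φ := Multiset.mem_map_of_mem φ hb
    rw [key] at this
    obtain ⟨i, _, hi⟩ := Multiset.mem_map.mp this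
    exact ⟨i, hφinj ((hβφ i).trans hi).symm⟩
  -- the index with maximal exponent
  obtain ⟨im, _, him⟩ := Finset.exists_max_image Finset.univ d ⟨i, Finset.mem_univ i⟩
  -- an automorphism sending β im to β j₀
  have hmp : ∀ (b : F), b ∈ R → minpoly ℚ b = q * C q.leadingCoeff⁻¹ := fun b hb =>
    (minpoly.eq_of_irreducible hirrq (hβroot b hb)).symm
  obtain ⟨σ, hσ⟩ : ∃ σ : F ≃ₐ[ℚ] F, σ (β im) = β j₀ := by
    have hmm : minpoly ℚ (β j₀) = minpoly ℚ (β im) := by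
      rw [hmp _ (hβR j₀), hmp _ (hβR im)]
    obtain ⟨σ, hσ⟩ := (Normal.minpoly_eq_iff_mem_orbit F).mp hmm
    exact ⟨σ, hσ⟩
  -- σ permutes the β's
  have hσroot : ∀ i, σ (β i) ∈ R := by
    intro i
    rw [hR, mem_roots hqF0, IsRoot.def, eval_map, ← aeval_def]
    show aeval (σ.toAlgHom (β i)) q = 0
    rw [aeval_algHom_apply]
    simp [hβroot (β i) (hβR i)]
  have hτex : ∀ i, ∃ j, σ (β i) = β j := fun i => hRrange _ (hσroot i)
  choose τ hτ using hτex
  have hτinj : Function.Injective τ := by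
    intro a b hab
    apply hβinj
    apply σ.injective
    rw [hτ a, hτ b, hab]
  have hτbij : Function.Bijective τ := Finite.injective_iff_bijective.mp hτinj
  set τe : Fin n ≃ Fin n := Equiv.ofBijective τ hτbij with hτe
  have hτim : τ im = j₀ := hβinj (by rw [← hτ im, hσ])
  -- transfer the multiplicative relation
  have hβprod : ∏ i', β i' ^ d i' = 1 := by
    apply hφinj
    rw [map_one, map_prod]
    rw [Finset.prod_congr rfl (fun i' _ => by rw [map_zpow₀, hβφ i'] :
      ∀ i' ∈ Finset.univ, φ (β i' ^ d i') = α i' ^ d i')]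
    exact hd
  have hβτprod : ∏ i', β (τ i') ^ d i' = 1 := by
    have h5 := congrArg σ hβprod
    rw [map_one, map_prod] at h5
    rw [← h5]
    exact Finset.prod_congr rfl fun i' _ => by rw [map_zpow₀, hτ i']
  have h4 : ∏ j', β j' ^ d (τe.symm j') = 1 := by
    rw [← Equiv.prod_comp τe (fun j' => β j' ^ d (τe.symm j'))]
    simpa [hτe, Equiv.ofBijective_apply, Equiv.symm_apply_apply] using hβτprod
  have heprod : ∏ j', α j' ^ d (τe.symm j') = 1 := by
    have h6 := congrArg φ h4
    rw [map_one, map_prod] at h6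
    rw [← h6]
    exact Finset.prod_congr rfl fun j' _ => by rw [map_zpow₀, hβφ]
  -- numeric part
  set e : Fin n → ℤ := fun j' => d (τe.symm j') with he
  set M : ℤ := d im with hM
  have hej0 : e j₀ = M := by
    have : τe.symm j₀ = im := by
      rw [Equiv.symm_apply_eq]
      exact (hτim).symm
    rw [he]; simp only [this, hM]
  have heM : ∀ j', e j' ≤ M := fun j' => him _ (Finset.mem_univ _)
  have hallM : ∀ j', e j' = M := by
    have hgprod : ∏ j', α j' ^ (M - e j') = 1 := by
      have h1 : ∏ j', α j' ^ (M : ℤ) = 1 := by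
        rw [Finset.prod_zpow, hprod1, one_zpow]
      calc ∏ j', α j' ^ (M - e j') = ∏ j', α j' ^ M / α j' ^ e j' := by
            refine Finset.prod_congr rfl fun j' _ => ?_
            rw [zpow_sub₀ (hane j')]
        _ = (∏ j', α j' ^ M) / ∏ j', α j' ^ e j' := Finset.prod_div_distrib _ _
        _ = 1 := by rw [h1, heprod, div_one]
    set k : Fin n → ℕ := fun j' => (M - e j').toNat with hk
    have hkval : ∀ j', ((k j' : ℤ)) = M - e j' := fun j' =>
      Int.toNat_of_nonneg (by linarith [heM j'])
    have hkj₀ : k j₀ = 0 := by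
      have := hkval j₀; rw [hej0] at this; omega
    have habs : ∏ j', ‖α j'‖ ^ (k j') = 1 := by
      have h2 := congrArg (‖·‖) hgprod
      rw [norm_prod, norm_one] at h2
      rw [← h2]
      refine Finset.prod_congr rfl fun j' _ => ?_
      rw [norm_zpow, ← hkval j', zpow_natCast]
    have hk0 : ∀ j', j' ≠ j₀ → k j' = 0 := by
      intro j' hj
      by_contra hkj
      have hrest : ∏ j'' ∈ Finset.univ.erase j', ‖α j''‖ ^ k j'' ≤ 1 := by
        refine Finset.prod_le_one (fun j'' _ => pow_nonneg (norm_nonneg _) _) ?_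
        intro j'' _
        by_cases hj'' : j'' = j₀
        · subst hj''; rw [hkj₀, pow_zero]
        · exact pow_le_one₀ (norm_nonneg _) (hsmall j'' hj'').le
      have hrestnn : (0:ℝ) ≤ ∏ j'' ∈ Finset.univ.erase j', ‖α j''‖ ^ k j'' :=
        Finset.prod_nonneg fun j'' _ => pow_nonneg (norm_nonneg _) _
      have hlt : ‖α j'‖ ^ k j' < 1 :=
        pow_lt_one₀ (norm_nonneg _) (hsmall j' hj) hkj
      have hsplit := Finset.mul_prod_erase Finset.univ
        (fun j'' => ‖α j''‖ ^ k j'') (Finset.mem_univ j')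
      rw [habs] at hsplit
      have hnn : (0:ℝ) ≤ ‖α j'‖ ^ k j' := pow_nonneg (norm_nonneg _) _
      nlinarith
    intro j'
    by_cases hj : j' = j₀
    · rw [hj, hej0]
    · have := hkval j'; rw [hk0 j' hj] at this; omega
  -- conclude
  have hdconst : ∀ i', d i' = M := by
    intro i'
    have := hallM (τe i')
    simpa [he] using this
  rw [hdconst i, hdconst j]
end

section
/- Let p ∈ ℤ[x] be a monic irreducible polynomial of degree n with constant term (-1)^n whose roots α₁,...,αₙ are not roots of unity. Suppose the action of the Galois group G of p on the roots is doubly transitive. Then the set of roots has full rank: the only integer solutions (d₁,...,dₙ) to α₁^{d₁} ⋯ αₙ^{dₙ} = 1 are those with d₁ = ⋯ = dₙ. -/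
open Polynomial

/-- Auxiliary: a nonzero element raised to a finite sum of integer exponents. -/
lemma stmt_2_zpow_sum {β : Type*} (x : ℂ) (hx : x ≠ 0) (s : Finset β) (f : β → ℤ) :
    x ^ (∑ b ∈ s, f b) = ∏ b ∈ s, x ^ f b := by
  induction s using Finset.cons_induction with
  | empty => simp
  | cons a s ha ih => rw [Finset.sum_cons, Finset.prod_cons, zpow_add₀ hx, ih]

/-- If `p ∈ ℤ[x]` is monic irreducible of degree `n` with constant term `(-1)^n`,
none of its roots is a root of unity, and the Galois action on the roots is
doubly transitive (any ordered pair of distinct roots can be carried to any other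
by a field embedding), then the set of roots has full rank: the only integer
solutions of `∏ αᵢ^{dᵢ} = 1` are constant tuples. -/
theorem stmt_2 (n : ℕ) (hn : 2 ≤ n) (p : Polynomial ℤ) (hmonic : p.Monic)
    (hirr : Irreducible p) (hdeg : p.natDegree = n)
    (hconst : p.coeff 0 = (-1) ^ n)
    (α : Fin n → ℂ)
    (hroots : p.map (Int.castRingHom ℂ) = ∏ i, (X - C (α i)))
    (hnru : ∀ i, ∀ k : ℕ, 0 < k → α i ^ k ≠ 1)
    (hdt : ∀ i j k l : Fin n, i ≠ j → k ≠ l →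
      ∃ σ : ℂ →+* ℂ, σ (α i) = α k ∧ σ (α j) = α l) :
    ∀ d : Fin n → ℤ, (∏ i, α i ^ d i) = 1 → ∀ i j, d i = d j := by
  classical
  -- product of all roots is 1
  have hα1 : ∏ i, α i = 1 := by
    have h := congrArg (Polynomial.eval 0) hroots
    rw [eval_prod] at h
    simp only [eval_sub, eval_X, eval_C, zero_sub] at h
    rw [Polynomial.eval_map, Polynomial.eval₂_at_zero, hconst] at h
    simp only [neg_eq_neg_one_mul (α _), Finset.prod_mul_distrib, Finset.prod_const,
      Finset.card_univ, Fintype.card_fin] at h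
    have hne : ((-1 : ℂ)) ^ n ≠ 0 := by simp
    apply mul_left_cancel₀ hne
    rw [mul_one, ← h]; simp
  -- roots are nonzero
  have hα0 : ∀ m, α m ≠ 0 := by
    intro m hm
    have : (∏ i, α i) = 0 := Finset.prod_eq_zero (Finset.mem_univ m) hm
    rw [hα1] at this; exact one_ne_zero this
  -- roots are distinct
  have hαinj : Function.Injective α := by
    have hq : Irreducible (p.map (algebraMap ℤ ℚ)) :=
      (hmonic.irreducible_iff_irreducible_map_fraction_map).mp hirr
    have hsep : (p.map (Int.castRingHom ℂ)).Separable := by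
      have h1 : ((p.map (algebraMap ℤ ℚ)).map (algebraMap ℚ ℂ)).Separable :=
        hq.separable.map
      rwa [Polynomial.map_map,
        Subsingleton.elim ((algebraMap ℚ ℂ).comp (algebraMap ℤ ℚ)) (Int.castRingHom ℂ)] at h1
    rw [hroots] at hsep
    exact Polynomial.separable_prod_X_sub_C_iff.mp hsep
  -- each root is a root of the polynomial, and embeddings permute the roots
  have hisroot : ∀ m, (p.map (Int.castRingHom ℂ)).eval (α m) = 0 := by
    intro m
    rw [hroots, eval_prod]
    exact Finset.prod_eq_zero (Finset.mem_univ m) (by simp)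
  have hσroot : ∀ (σ : ℂ →+* ℂ) (m : Fin n), ∃ k, σ (α m) = α k := by
    intro σ m
    have h0 : (p.map (Int.castRingHom ℂ)).eval (σ (α m)) = 0 := by
      have := congrArg σ (hisroot m)
      rw [Polynomial.eval_map, Polynomial.hom_eval₂,
        Subsingleton.elim (σ.comp (Int.castRingHom ℂ)) (Int.castRingHom ℂ)] at this
      rw [Polynomial.eval_map]
      simpa using this
    rw [hroots, eval_prod] at h0
    obtain ⟨k, -, hk⟩ := Finset.prod_eq_zero_iff.mp h0
    exact ⟨k, by simpa [sub_eq_zero] using hk⟩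
  have hσperm : ∀ σ : ℂ →+* ℂ, ∃ π : Equiv.Perm (Fin n), ∀ m, σ (α m) = α (π m) := by
    intro σ
    choose g hg using hσroot σ
    have hginj : Function.Injective g := by
      intro a b hab
      apply hαinj
      apply σ.injective
      rw [hg, hg, hab]
    exact ⟨Equiv.ofBijective g (Finite.injective_iff_bijective.mp hginj), hg⟩
  -- the set of permutations of indices induced by embeddings
  set S : Set (Equiv.Perm (Fin n)) := {π | ∃ σ : ℂ →+* ℂ, ∀ m, σ (α m) = α (π m)} with hS
  have hS1 : (1 : Equiv.Perm (Fin n)) ∈ S := ⟨RingHom.id ℂ, by simp⟩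
  have hSmul : ∀ π ∈ S, ∀ ρ ∈ S, π * ρ ∈ S := by
    rintro π ⟨σ, hσ⟩ ρ ⟨τ, hτ⟩
    exact ⟨σ.comp τ, fun m => by simp [hτ, hσ, Equiv.Perm.mul_apply]⟩
  have hSpow : ∀ π ∈ S, ∀ k : ℕ, π ^ (k + 1) ∈ S := by
    intro π hπ k
    induction k with
    | zero => simpa using hπ
    | succ k ih => rw [pow_succ]; exact hSmul _ ih _ hπ
  have hSinv : ∀ π ∈ S, π⁻¹ ∈ S := by
    intro π hπ
    have ho : 1 ≤ orderOf π := orderOf_pos π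
    have hkey : π ^ (2 * orderOf π - 1) = π⁻¹ := by
      apply eq_inv_of_mul_eq_one_left
      rw [← pow_succ]
      have : 2 * orderOf π - 1 + 1 = 2 * orderOf π := by omega
      rw [this, pow_mul', pow_orderOf_eq_one, one_pow]
    have h2 : 2 * orderOf π - 1 = (2 * orderOf π - 2) + 1 := by omega
    rw [← hkey, h2]
    exact hSpow _ hπ _
  -- 2-transitivity of induced permutations, with fixed point
  have htrans : ∀ i k l : Fin n, i ≠ k → i ≠ l → ∃ π ∈ S, π i = i ∧ π k = l := by
    intro i k l hik hil
    obtain ⟨σ, hσ1, hσ2⟩ := hdt i k i l hik hil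
    obtain ⟨π, hπ⟩ := hσperm σ
    refine ⟨π, ⟨σ, hπ⟩, hαinj ?_, hαinj ?_⟩
    · rw [← hπ, hσ1]
    · rw [← hπ, hσ2]
  -- transport of multiplicative relations
  have hL : ∀ e : Fin n → ℤ, (∏ m, α m ^ e m) = 1 → ∀ π ∈ S, (∏ m, α m ^ e (π m)) = 1 := by
    intro e he π hπ
    obtain ⟨σ, hσ⟩ := hSinv π hπ
    have h1 : σ (∏ m, α m ^ e m) = 1 := by rw [he, map_one]
    rw [map_prod] at h1
    simp only [map_zpow₀, hσ] at h1
    calc (∏ m, α m ^ e (π m)) = ∏ m, α (π⁻¹ (π m)) ^ e (π m) := by simp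
      _ = ∏ m, α (π⁻¹ m) ^ e m := Equiv.prod_comp π (fun t => α (π⁻¹ t) ^ e t)
      _ = 1 := h1
  -- main argument
  intro d hd
  by_contra hcon
  push_neg at hcon
  obtain ⟨i₁, j₁, hij⟩ := hcon
  -- take i₀ maximizing d
  obtain ⟨i₀, -, hmax⟩ := Finset.exists_max_image (Finset.univ : Finset (Fin n)) d
    ⟨i₁, Finset.mem_univ i₁⟩
  have hmax' : ∀ m, d m ≤ d i₀ := fun m => hmax m (Finset.mem_univ m)
  have hstrict : ∃ m, d m < d i₀ := by
    by_contra h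
    push_neg at h
    have h1 : d i₁ = d i₀ := le_antisymm (hmax' i₁) (h i₁)
    have h2 : d j₁ = d i₀ := le_antisymm (hmax' j₁) (h j₁)
    exact hij (h1.trans h2.symm)
  set s : ℤ := ∑ m ∈ Finset.univ.erase i₀, d m with hs
  have hcerase : (Finset.univ.erase i₀).card = n - 1 := by
    rw [Finset.card_erase_of_mem (Finset.mem_univ i₀), Finset.card_univ, Fintype.card_fin]
  have hslt : s < ((n - 1 : ℕ) : ℤ) * d i₀ := by
    obtain ⟨m₀, hm₀⟩ := hstrict
    have hm₀ne : m₀ ≠ i₀ := fun h => absurd (h ▸ hm₀) (lt_irrefl _)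
    have : s < ∑ _m ∈ Finset.univ.erase i₀, d i₀ :=
      Finset.sum_lt_sum (fun m _ => hmax' m)
        ⟨m₀, Finset.mem_erase.mpr ⟨hm₀ne, Finset.mem_univ m₀⟩, hm₀⟩
    rwa [Finset.sum_const, hcerase, nsmul_eq_mul] at this
  -- the stabilizer of i₀ in S, as a finset
  set Hf : Finset (Equiv.Perm (Fin n)) :=
    Finset.univ.filter (fun π => π ∈ S ∧ π i₀ = i₀) with hHf
  have hHf1 : (1 : Equiv.Perm (Fin n)) ∈ Hf := by
    rw [hHf]; exact Finset.mem_filter.mpr ⟨Finset.mem_univ _, hS1, rfl⟩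
  have hHfpos : 0 < Hf.card := Finset.card_pos.mpr ⟨1, hHf1⟩
  have hHfmem : ∀ π ∈ Hf, π ∈ S ∧ π i₀ = i₀ := by
    intro π hπ; exact (Finset.mem_filter.mp hπ).2
  -- fibers
  have hmapsto : ∀ m, m ≠ i₀ → ∀ π ∈ Hf, π m ∈ Finset.univ.erase i₀ := by
    intro m hm π hπ
    obtain ⟨hπS, hπi⟩ := hHfmem π hπ
    refine Finset.mem_erase.mpr ⟨fun h => hm ?_, Finset.mem_univ _⟩
    exact π.injective (h.trans hπi.symm)
  have hfib_eq : ∀ m, m ≠ i₀ → ∀ m', m' ≠ i₀ → ∀ m'', m'' ≠ i₀ →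
      (Hf.filter (fun π => π m = m')).card = (Hf.filter (fun π => π m = m'')).card := by
    intro m hm m' hm' m'' hm''
    obtain ⟨τ, hτS, hτi, hτm⟩ := htrans i₀ m' m'' (Ne.symm hm') (Ne.symm hm'')
    have hτinv : τ⁻¹ ∈ S := hSinv τ hτS
    have hτinvi : τ⁻¹ i₀ = i₀ := Equiv.Perm.inv_eq_iff_eq.mpr hτi.symm
    have hτinvm : τ⁻¹ m'' = m' := Equiv.Perm.inv_eq_iff_eq.mpr hτm.symm
    apply Finset.card_bij' (fun π _ => τ * π) (fun ρ _ => τ⁻¹ * ρ)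
    · intro π hπ
      obtain ⟨hπHf, hπm⟩ := Finset.mem_filter.mp hπ
      obtain ⟨hπS, hπi⟩ := hHfmem π hπHf
      refine Finset.mem_filter.mpr ⟨Finset.mem_filter.mpr
        ⟨Finset.mem_univ _, hSmul _ hτS _ hπS, ?_⟩, ?_⟩
      · rw [Equiv.Perm.mul_apply, hπi, hτi]
      · rw [Equiv.Perm.mul_apply, hπm, hτm]
    · intro ρ hρ
      obtain ⟨hρHf, hρm⟩ := Finset.mem_filter.mp hρ
      obtain ⟨hρS, hρi⟩ := hHfmem ρ hρHf
      refine Finset.mem_filter.mpr ⟨Finset.mem_filter.mpr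
        ⟨Finset.mem_univ _, hSmul _ hτinv _ hρS, ?_⟩, ?_⟩
      · rw [Equiv.Perm.mul_apply, hρi, hτinvi]
      · rw [Equiv.Perm.mul_apply, hρm, hτinvm]
    · intro π _; rw [← mul_assoc, inv_mul_cancel, one_mul]
    · intro ρ _; rw [← mul_assoc, mul_inv_cancel, one_mul]
  have hcard_sum : ∀ m, m ≠ i₀ →
      ∑ m' ∈ Finset.univ.erase i₀, (Hf.filter (fun π => π m = m')).card = Hf.card :=
    fun m hm => (Finset.card_eq_sum_card_fiberwise (hmapsto m hm)).symm
  -- key: (n-1) * fiber card = Hf.card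
  have hfib_card : ∀ m, m ≠ i₀ → ∀ m', m' ≠ i₀ →
      (n - 1) * (Hf.filter (fun π => π m = m')).card = Hf.card := by
    intro m hm m' hm'
    rw [← hcard_sum m hm]
    rw [Finset.sum_congr rfl (fun m'' hm'' =>
      hfib_eq m hm m'' (Finset.mem_erase.mp hm'').1 m' hm')]
    rw [Finset.sum_const, hcerase, smul_eq_mul]
  -- the averaged vector
  set u : Fin n → ℤ := fun t => ∑ π ∈ Hf, d (π t) with hu
  have hu_i0 : u i₀ = (Hf.card : ℤ) * d i₀ := by
    rw [hu]
    simp only []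
    rw [Finset.sum_congr rfl (fun π hπ => by rw [(hHfmem π hπ).2]), Finset.sum_const,
      nsmul_eq_mul]
  have hu_m : ∀ m, m ≠ i₀ → ((n - 1 : ℕ) : ℤ) * u m = (Hf.card : ℤ) * s := by
    intro m hm
    have h1 : u m = ∑ m' ∈ Finset.univ.erase i₀,
        ∑ π ∈ Hf.filter (fun π => π m = m'), d (π m) :=
      (Finset.sum_fiberwise_of_maps_to (hmapsto m hm) _).symm
    have h2 : u m = ∑ m' ∈ Finset.univ.erase i₀,
        ((Hf.filter (fun π => π m = m')).card : ℤ) * d m' := by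
      rw [h1]
      refine Finset.sum_congr rfl (fun m' _ => ?_)
      rw [Finset.sum_congr rfl (fun π hπ => by rw [(Finset.mem_filter.mp hπ).2]),
        Finset.sum_const, nsmul_eq_mul]
    rw [h2, Finset.mul_sum, hs, Finset.mul_sum]
    refine Finset.sum_congr rfl (fun m' hm' => ?_)
    rw [← mul_assoc, ← Nat.cast_mul, hfib_card m hm m' (Finset.mem_erase.mp hm').1]
  -- u satisfies the relation
  have hurel : (∏ m, α m ^ u m) = 1 := by
    rw [hu]
    simp only []
    rw [Finset.prod_congr rfl (fun m _ => stmt_2_zpow_sum (α m) (hα0 m) Hf (fun π => d (π m)))]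
    rw [Finset.prod_comm]
    rw [Finset.prod_congr rfl (fun π hπ => hL d hd π (hHfmem π hπ).1)]
    exact Finset.prod_const_one
  -- assemble the final relation: α i₀ ^ N = 1 with N > 0
  set c : ℤ := ((n - 1 : ℕ) : ℤ) with hc
  set K : ℤ := (Hf.card : ℤ) * s with hK
  have hrel1 : (∏ m, α m ^ (c * u m)) = 1 := by
    have : ∀ m, α m ^ (c * u m) = (α m ^ u m) ^ c := fun m => by rw [mul_comm, zpow_mul]
    rw [Finset.prod_congr rfl (fun m _ => this m), Finset.prod_zpow, hurel, one_zpow]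
  have hrel2 : (∏ m, α m ^ K) = 1 := by
    rw [Finset.prod_zpow, hα1, one_zpow]
  have hrel3 : (∏ m, α m ^ (c * u m - K)) = 1 := by
    rw [Finset.prod_congr rfl (fun m _ => zpow_sub₀ (hα0 m) _ _), Finset.prod_div_distrib,
      hrel1, hrel2, div_one]
  set N : ℤ := c * u i₀ - K with hN
  have hsingle : α i₀ ^ N = 1 := by
    rw [← hrel3]
    symm
    apply Finset.prod_eq_single_of_mem i₀ (Finset.mem_univ i₀)
    intro m _ hm
    rw [hu_m m hm]
    simp [hK]
  have hNpos : 0 < N := by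
    rw [hN, hu_i0, hK, ← mul_assoc, mul_comm c, mul_assoc, ← mul_sub]
    apply mul_pos (by exact_mod_cast hHfpos)
    rw [sub_pos]
    exact hslt
  have hNnat : α i₀ ^ N.toNat = 1 := by
    have : (N.toNat : ℤ) = N := Int.toNat_of_nonneg hNpos.le
    rw [← zpow_natCast, this, hsingle]
  exact hnru i₀ N.toNat (by omega) hNnat
end

section
/- Let G be a finite group acting on a set of size n. If the permutation representation of G on ℚⁿ is the direct sum of the trivial representation on ℚ·(1,1,...,1) and a representation on the orthogonal complement W that is irreducible over ℚ, and if α₁,...,αₙ are nonzero algebraic numbers (none a root of unity) permuted by G via an identification with the set, with α₁⋯αₙ = 1, then every integer solution (d₁,...,dₙ) of α₁^{d₁}⋯αₙ^{dₙ} = 1 satisfies d₁ = ⋯ = dₙ. -/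
open Polynomial

/-- Let a finite group `G` act on `Fin n` via `σ : G →* Equiv.Perm (Fin n)`.
Suppose the permutation representation of `G` on `ℚⁿ` is the sum of the trivial
representation on `ℚ·(1,…,1)` and a `ℚ`-irreducible representation on the
complement `W = {v | ∑ vᵢ = 0}` (expressed here: every invariant subspace
contained in `W` is `⊥` or all of `W`).  If `α₁,…,αₙ` are nonzero algebraic
numbers, none a root of unity, permuted by `G` via field embeddings, with
`∏ αᵢ = 1`, then every integer solution of `∏ αᵢ^{dᵢ} = 1` is constant. -/
theorem stmt_3 (n : ℕ) (G : Type*) [Group G] [Finite G]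
    (σ : G →* Equiv.Perm (Fin n))
    (hirrW : ∀ U : Submodule ℚ (Fin n → ℚ),
      (∀ g : G, ∀ v ∈ U, (fun i => v (σ g i)) ∈ U) →
      (∀ v ∈ U, ∑ i, v i = 0) →
      (U = ⊥ ∨ ∀ v : Fin n → ℚ, (∑ i, v i = 0) → v ∈ U))
    (α : Fin n → ℂ)
    (hα0 : ∀ i, α i ≠ 0)
    (halg : ∀ i, IsAlgebraic ℚ (α i))
    (hnru : ∀ i, ∀ k : ℕ, 0 < k → α i ^ k ≠ 1)
    (hgal : ∀ g : G, ∃ φ : ℂ →+* ℂ, ∀ i, φ (α i) = α (σ g i))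
    (hprod : ∏ i, α i = 1) :
    ∀ d : Fin n → ℤ, (∏ i, α i ^ d i) = 1 → ∀ i j, d i = d j := by
  rcases Nat.eq_zero_or_pos n with hn | hn
  · subst hn; exact fun d hd i => i.elim0
  -- The predicate: integer exponent vectors solving the multiplicative relation
  set P : (Fin n → ℤ) → Prop := fun a => ∏ i, α i ^ a i = 1 with hP
  -- closure properties
  have hP_add : ∀ a b, P a → P b → P (a + b) := by
    intro a b ha hb
    show ∏ i, α i ^ (a i + b i) = 1
    calc ∏ i, α i ^ (a i + b i) = ∏ i, α i ^ a i * α i ^ b i :=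
          Finset.prod_congr rfl fun i _ => zpow_add₀ (hα0 i) _ _
      _ = (∏ i, α i ^ a i) * ∏ i, α i ^ b i := Finset.prod_mul_distrib
      _ = 1 := by rw [ha, hb, one_mul]
  have hP_zero : P 0 := by simp [hP]
  have hP_smul : ∀ (c : ℤ) a, P a → P (c • a) := by
    intro c a ha
    show ∏ i, α i ^ (c • a) i = 1
    calc ∏ i, α i ^ (c • a) i = ∏ i, (α i ^ a i) ^ c :=
          Finset.prod_congr rfl fun i _ => by
            simp only [Pi.smul_apply, smul_eq_mul, mul_comm c, zpow_mul]
      _ = (∏ i, α i ^ a i) ^ c := Finset.prod_zpow _ _ _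
      _ = 1 := by rw [ha, one_zpow]
  -- invariance under the G-action
  have hP_perm : ∀ (g : G) a, P a → P (fun i => a (σ g i)) := by
    intro g a ha
    obtain ⟨φ, hφ⟩ := hgal g⁻¹
    have h1 : φ (∏ i, α i ^ a i) = 1 := by rw [ha]; exact map_one φ
    rw [map_prod] at h1
    have h2 : ∀ i, φ (α i ^ a i) = α ((σ g)⁻¹ i) ^ a i := by
      intro i
      rw [map_zpow₀, hφ i, map_inv]
    rw [Finset.prod_congr rfl fun i _ => h2 i] at h1
    have h3 : ∏ i, α ((σ g)⁻¹ i) ^ a i = ∏ i, α i ^ a (σ g i) := by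
      have := Equiv.prod_comp ((σ g)⁻¹ : Equiv.Perm (Fin n))
        (fun j => α j ^ a (σ g j))
      simpa using this
    rw [h3] at h1
    exact h1
  -- the constant vector 1 solves the relation
  have hP_one : P (fun _ => (1 : ℤ)) := by simpa [hP] using hprod
  -- the span of (casts of) sum-zero solutions
  set S : Set (Fin n → ℚ) :=
    (fun a : Fin n → ℤ => (fun i => (a i : ℚ))) '' {a | P a ∧ ∑ i, a i = 0} with hS
  set U : Submodule ℚ (Fin n → ℚ) := Submodule.span ℚ S with hU
  -- U is G-invariant
  have hUinv : ∀ g : G, ∀ v ∈ U, (fun i => v (σ g i)) ∈ U := by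
    intro g v hv
    have hmap : U.map (LinearMap.funLeft ℚ ℚ (σ g)) ≤ U := by
      rw [hU, Submodule.map_span, Submodule.span_le]
      rintro x ⟨y, ⟨a, ⟨haP, haS⟩, rfl⟩, rfl⟩
      apply Submodule.subset_span
      refine ⟨fun i => a (σ g i), ⟨hP_perm g a haP, ?_⟩, rfl⟩
      rw [Equiv.sum_comp (σ g) a]; exact haS
    exact hmap ⟨v, hv, rfl⟩
  -- every vector in U has coordinate sum zero
  have hUsum : ∀ v ∈ U, ∑ i, v i = 0 := by
    intro v hv
    induction hv using Submodule.span_induction with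
    | mem x hx =>
        obtain ⟨a, ⟨-, haS⟩, rfl⟩ := hx
        have : ((∑ i, a i : ℤ) : ℚ) = ∑ i, (a i : ℚ) := by push_cast; ring
        rw [← this, haS]; norm_num
    | zero => simp
    | add x y _ _ hx hy => simp [Finset.sum_add_distrib, hx, hy]
    | smul c x _ hx => simp [← Finset.mul_sum, hx]
  rcases hirrW U hUinv hUsum with hbot | htop
  · -- U = ⊥ : every sum-zero solution is 0
    intro d hd i j
    set s : ℤ := ∑ k, d k with hs
    set w : Fin n → ℤ := fun k => (n : ℤ) * d k - s with hw
    have hPw : P w := by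
      have h1 : P ((n : ℤ) • d) := hP_smul _ _ hd
      have h2 : P ((-s) • fun _ => (1 : ℤ)) := hP_smul _ _ hP_one
      have := hP_add _ _ h1 h2
      have he : ((n : ℤ) • d + (-s) • fun _ => (1 : ℤ)) = w := by
        funext k; simp [hw]; ring
      rwa [he] at this
    have hsw : ∑ k, w k = 0 := by
      simp only [hw]
      rw [Finset.sum_sub_distrib, ← Finset.mul_sum, ← hs]
      simp [Finset.sum_const, Finset.card_univ, mul_comm]
    have hmem : (fun k => ((w k : ℚ))) ∈ U :=
      Submodule.subset_span ⟨w, ⟨hPw, hsw⟩, rfl⟩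
    rw [hbot, Submodule.mem_bot] at hmem
    have hw0 : ∀ k, w k = 0 := by
      intro k
      have : ((w k : ℚ)) = 0 := by simpa using congrFun hmem k
      exact_mod_cast this
    have hi := hw0 i
    have hj := hw0 j
    simp only [hw, sub_eq_zero] at hi hj
    have : (n : ℤ) * d i = (n : ℤ) * d j := by rw [hi, hj]
    exact mul_left_cancel₀ (by exact_mod_cast hn.ne') this
  · -- U ⊇ W : derive a contradiction with "no root of unity"
    exfalso
    set i₀ : Fin n := ⟨0, hn⟩ with hi₀
    set u : Fin n → ℚ := fun j => (n : ℚ) * (if j = i₀ then 1 else 0) - 1 with hu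
    have hsu : ∑ j, u j = 0 := by
      simp [hu, Finset.sum_sub_distrib, ← Finset.mul_sum, Finset.sum_ite_eq',
        Finset.sum_const, Finset.card_univ]
    have humem : u ∈ U := htop u hsu
    rw [hU] at humem
    obtain ⟨c, hcsupp, hcsum⟩ := Submodule.mem_span_set.mp humem
    -- integer preimages of the generators
    have hA : ∀ x ∈ S, ∃ a : Fin n → ℤ, P a ∧ ∀ i, ((a i : ℚ)) = x i := by
      rintro x ⟨a, ⟨haP, -⟩, rfl⟩; exact ⟨a, haP, fun i => rfl⟩
    classical
    set B : (Fin n → ℚ) → (Fin n → ℤ) :=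
      fun x => if h : x ∈ S then (hA x h).choose else 0 with hB
    have hBP : ∀ x ∈ S, P (B x) := by
      intro x hx; rw [hB]; simp only [dif_pos hx]; exact (hA x hx).choose_spec.1
    have hBcast : ∀ x ∈ S, ∀ i, ((B x i : ℚ)) = x i := by
      intro x hx; rw [hB]; simp only [dif_pos hx]; exact (hA x hx).choose_spec.2
    -- common denominator
    set m : ℕ := ∏ x ∈ c.support, (c x).den with hm
    have hmpos : 0 < m := Finset.prod_pos fun x _ => (c x).pos
    -- integer coefficients
    set cz : (Fin n → ℚ) → ℤ := fun x => (m / (c x).den : ℕ) * (c x).num with hcz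
    have hcast : ∀ x ∈ c.support, ((cz x : ℚ)) = (m : ℚ) * c x := by
      intro x hx
      have hd : (c x).den ∣ m := Finset.dvd_prod_of_mem _ hx
      have hden : ((c x).den : ℚ) ≠ 0 := by
        exact_mod_cast (c x).den_nz
      have h1 : ((m / (c x).den : ℕ) : ℚ) * ((c x).den : ℚ) = (m : ℚ) := by
        rw [← Nat.cast_mul, Nat.div_mul_cancel hd]
      calc ((cz x : ℚ)) = ((m / (c x).den : ℕ) : ℚ) * ((c x).num : ℚ) := by
            rw [hcz, Int.cast_mul, Int.cast_natCast]
        _ = ((m / (c x).den : ℕ) : ℚ) * ((c x).den : ℚ) * (((c x).num : ℚ) / ((c x).den : ℚ)) := by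
            field_simp
        _ = (m : ℚ) * c x := by rw [h1, Rat.num_div_den]
    -- the integer vector
    set w : Fin n → ℤ := ∑ x ∈ c.support, cz x • B x with hw
    have hPw : P w := by
      rw [hw]
      refine Finset.sum_induction _ P hP_add hP_zero ?_
      intro x hx
      exact hP_smul _ _ (hBP x (hcsupp hx))
    -- its cast equals m • u
    have hwcast : ∀ j, ((w j : ℚ)) = (m : ℚ) * u j := by
      intro j
      have huj : ∑ x ∈ c.support, c x * x j = u j := by
        have := congrFun hcsum j
        simpa [Finsupp.sum, Finset.sum_apply] using this
      have : ((w j : ℚ)) = ∑ x ∈ c.support, ((cz x : ℚ)) * ((B x j : ℚ)) := by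
        rw [hw, Finset.sum_apply]
        push_cast
        exact Finset.sum_congr rfl fun x _ => by
          simp [Pi.smul_apply, smul_eq_mul]
      rw [this, Finset.sum_congr rfl fun x hx => by
        rw [hcast x hx, hBcast x (hcsupp hx) j]]
      rw [← huj, Finset.mul_sum]
      exact Finset.sum_congr rfl fun x _ => by ring
    -- shift by the constant vector m
    set w' : Fin n → ℤ := w + (m : ℤ) • fun _ => (1 : ℤ) with hw'
    have hPw' : P w' := hP_add _ _ hPw (hP_smul _ _ hP_one)
    have hw'val : ∀ j, w' j = if j = i₀ then ((m : ℤ) * n) else 0 := by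
      intro j
      have h1 : ((w' j : ℚ)) = (m : ℚ) * u j + m := by
        have hj : w' j = w j + m := by
          rw [hw']; simp [Pi.add_apply]
        rw [hj]; push_cast [hwcast j]; ring
      have h2 : (((if j = i₀ then ((m : ℤ) * n) else 0) : ℤ) : ℚ)
          = (m : ℚ) * u j + m := by
        by_cases h : j = i₀
        · simp only [hu, h, if_pos rfl, Int.cast_mul, Int.cast_natCast]; push_cast; ring
        · simp only [hu, if_neg h, Int.cast_zero]; ring
      exact_mod_cast h1.trans h2.symm
    have hfinal : α i₀ ^ ((m : ℤ) * n) = 1 := by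
      have h1 : ∏ i, α i ^ w' i = 1 := hPw'
      rw [Finset.prod_congr rfl fun i _ => by rw [hw'val i]] at h1
      rw [Finset.prod_eq_single i₀ (fun b _ hb => by rw [if_neg hb, zpow_zero])
        (fun h => absurd (Finset.mem_univ i₀) h)] at h1
      rwa [if_pos rfl] at h1
    have hfinal' : α i₀ ^ (m * n : ℕ) = 1 := by
      rw [← zpow_natCast]
      have : ((m * n : ℕ) : ℤ) = (m : ℤ) * n := by push_cast; ring
      rw [this]; exact hfinal
    exact hnru i₀ (m * n) (Nat.mul_pos hmpos hn) hfinal'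
end

section
/- Let p₁ ∈ ℤ[x] be a monic polynomial of degree n ≥ 3 with constant term ±1, no root of modulus one, and roots α₁,...,αₙ. For each i ≥ 2, the polynomial pᵢ whose roots are the eigenvalue words of degree i (products of i roots of p₁ corresponding to Hall words, e.g., all products α_j α_k with j < k for i = 2) has at least one root of modulus greater than one and at least one root of modulus less than one. In particular, for i ≥ 2 there exist indices so that some product α_{j₁}^{i-1} α_{j₂} has modulus less than one. -/
open Polynomial

lemma stmt_4_half (n i : ℕ) (hn : 3 ≤ n) (hi : 2 ≤ i) (r : Fin n → ℝ)
    (hpos : ∀ j, 0 < r j) (hprod : ∏ j, r j = 1) (hne1 : ∀ j, r j ≠ 1) :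
    ∃ j₁ j₂ : Fin n, j₁ ≠ j₂ ∧ r j₁ ^ (i - 1) * r j₂ < 1 := by
  have hne : (Finset.univ : Finset (Fin n)).Nonempty := by
    have hh : Nonempty (Fin n) := Fin.pos_iff_nonempty.mp (by omega)
    exact Finset.univ_nonempty
  obtain ⟨j₁, -, hj₁⟩ := Finset.exists_min_image Finset.univ r hne
  have hm1 : r j₁ < 1 := by
    by_contra h
    push_neg at h
    have h1 : (1:ℝ) < ∏ j, r j := by
      calc (1:ℝ) = ∏ _j : Fin n, (1:ℝ) := by simp
      _ < ∏ j, r j := by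
        refine Finset.prod_lt_prod_of_nonempty (fun _ _ => one_pos) ?_ hne
        intro j _
        rcases lt_or_eq_of_le (le_trans h (hj₁ j (Finset.mem_univ j))) with h' | h'
        · exact h'
        · exact absurd h'.symm (hne1 j)
    rw [hprod] at h1
    exact lt_irrefl 1 h1
  have hcard : (Finset.univ.erase j₁).card = n - 1 := by
    rw [Finset.card_erase_of_mem (Finset.mem_univ j₁)]
    simp
  have herase_ne : (Finset.univ.erase j₁).Nonempty := by
    rw [← Finset.card_pos, hcard]; omega
  obtain ⟨j₂, hj₂mem, hj₂⟩ := Finset.exists_min_image (Finset.univ.erase j₁) r herase_ne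
  have hj₂ne : j₂ ≠ j₁ := (Finset.mem_erase.mp hj₂mem).1
  have hm0 : 0 < r j₁ := hpos j₁
  have hM0 : 0 < r j₂ := hpos j₂
  have hprod_erase : ∏ j ∈ Finset.univ.erase j₁, r j = 1 / r j₁ := by
    have h := Finset.mul_prod_erase Finset.univ r (Finset.mem_univ j₁)
    rw [hprod] at h
    field_simp
    linarith [h.symm]
  have hpowM : r j₂ ^ (n-1) ≤ 1 / r j₁ := by
    calc r j₂ ^ (n-1) = ∏ _j ∈ Finset.univ.erase j₁, r j₂ := by
          rw [Finset.prod_const, hcard]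
    _ ≤ ∏ j ∈ Finset.univ.erase j₁, r j :=
        Finset.prod_le_prod (fun _ _ => hM0.le) (fun j hj => hj₂ j hj)
    _ = 1 / r j₁ := hprod_erase
  refine ⟨j₁, j₂, hj₂ne.symm, ?_⟩
  have hiexp : r j₁ ^ (i-1) ≤ r j₁ := by
    calc r j₁ ^ (i-1) ≤ r j₁ ^ 1 := pow_le_pow_of_le_one hm0.le hm1.le (by omega)
    _ = r j₁ := pow_one _
  have hppos : 0 < r j₁ ^ (i-1) := pow_pos hm0 _
  rcases le_or_gt (r j₂) 1 with hM | hM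
  · calc r j₁ ^ (i-1) * r j₂ ≤ r j₁ ^ (i-1) * 1 := by nlinarith
    _ ≤ r j₁ := by rw [mul_one]; exact hiexp
    _ < 1 := hm1
  · have h2 : r j₂ < r j₂ ^ (n-1) := by
      calc r j₂ = r j₂ ^ 1 := (pow_one _).symm
      _ < r j₂ ^ (n-1) := by
        apply pow_lt_pow_right₀ hM
        omega
    have hMlt : r j₂ < 1 / r j₁ := lt_of_lt_of_le h2 hpowM
    calc r j₁ ^ (i-1) * r j₂ ≤ r j₁ * r j₂ := by nlinarith
    _ < r j₁ * (1 / r j₁) := by nlinarith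
    _ = 1 := by field_simp

/-- Let `p₁ ∈ ℤ[x]` be monic of degree `n ≥ 3` with constant term `±1`, with no
root of modulus one.  For each `i ≥ 2`, among the eigenvalue words of degree `i`
(products of `i` roots, e.g. `α_{j₁}^{i-1}·α_{j₂}` with `j₁ ≠ j₂`) there is one
of modulus less than one and one of modulus greater than one. -/
theorem stmt_4 (n : ℕ) (hn : 3 ≤ n) (p : Polynomial ℤ) (hmonic : p.Monic)
    (hdeg : p.natDegree = n)
    (hconst : p.coeff 0 = 1 ∨ p.coeff 0 = -1)
    (α : Fin n → ℂ)
    (hroots : p.map (Int.castRingHom ℂ) = ∏ j, (X - C (α j)))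
    (hhyp : ∀ j, ‖α j‖ ≠ 1) :
    ∀ i : ℕ, 2 ≤ i →
      (∃ j₁ j₂ : Fin n, j₁ ≠ j₂ ∧ ‖α j₁ ^ (i - 1) * α j₂‖ < 1) ∧
      (∃ k₁ k₂ : Fin n, k₁ ≠ k₂ ∧ 1 < ‖α k₁ ^ (i - 1) * α k₂‖) := by
  intro i hi
  set r : Fin n → ℝ := fun j => ‖α j‖ with hr
  have hprod : ∏ j, r j = 1 := by
    have h1 : (p.map (Int.castRingHom ℂ)).coeff 0 = ((p.coeff 0 : ℤ) : ℂ) := by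
      simp [Polynomial.coeff_map]
    have h2 : (p.map (Int.castRingHom ℂ)).coeff 0 = ∏ j, (-(α j)) := by
      rw [hroots, Polynomial.coeff_zero_eq_eval_zero, Polynomial.eval_prod]
      simp
    have h3 : ‖∏ j, (-(α j))‖ = 1 := by
      rw [← h2, h1]
      rcases hconst with h | h <;> simp [h]
    calc ∏ j, r j = ∏ j, ‖-(α j)‖ := by simp [hr]
    _ = ‖∏ j, (-(α j))‖ := (norm_prod _ _).symm
    _ = 1 := h3
  have hrpos : ∀ j, 0 < r j := by
    intro j
    rcases eq_or_lt_of_le (norm_nonneg (α j)) with h | h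
    · exfalso
      have h0 : ∏ j, r j = 0 := Finset.prod_eq_zero (Finset.mem_univ j) h.symm
      rw [hprod] at h0
      norm_num at h0
    · exact h
  constructor
  · obtain ⟨j₁, j₂, hne, hlt⟩ := stmt_4_half n i hn hi r hrpos hprod hhyp
    refine ⟨j₁, j₂, hne, ?_⟩
    rw [norm_mul, norm_pow]
    exact hlt
  · obtain ⟨k₁, k₂, hne, hlt⟩ := stmt_4_half n i hn hi (fun j => (r j)⁻¹)
      (fun j => inv_pos.mpr (hrpos j))
      (by rw [show ∏ x : Fin n, (r x)⁻¹ = (∏ x : Fin n, r x)⁻¹ from Finset.prod_inv_distrib _, hprod]; norm_num)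
      (fun j => by simp [inv_eq_one]; exact hhyp j)
    refine ⟨k₁, k₂, hne, ?_⟩
    rw [norm_mul, norm_pow]
    have hx : 0 < r k₁ ^ (i-1) * r k₂ := mul_pos (pow_pos (hrpos k₁) _) (hrpos k₂)
    have : (r k₁ ^ (i-1) * r k₂)⁻¹ < 1 := by
      rw [mul_inv, ← inv_pow]
      exact hlt
    exact (inv_lt_one₀ hx).mp this
end

section
/- The polynomial p(x) = xⁿ - x - 1 (n ≥ 2) has no roots of modulus one. -/
/-- The polynomial `xⁿ - x - 1` (`n ≥ 2`) has no roots of modulus one. -/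
theorem stmt_7 (n : ℕ) (hn : 2 ≤ n) (z : ℂ) (hz : z ^ n - z - 1 = 0) :
    ‖z‖ ≠ 1 := by
  intro habs
  have hz0 : z ≠ 0 := by
    intro h; rw [h] at habs; simp at habs
  have h1 : z ^ n = z + 1 := by linear_combination hz
  have hzz : z * (starRingEnd ℂ) z = 1 := by
    rw [Complex.mul_conj, Complex.normSq_eq_norm_sq, habs]; norm_num
  have h2 : (z + 1) * (starRingEnd ℂ) (z + 1) = 1 := by
    rw [Complex.mul_conj, Complex.normSq_eq_norm_sq, ← h1, norm_pow, habs, one_pow]; norm_num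
  have h2' : (z + 1) * ((starRingEnd ℂ) z + 1) = 1 := by
    simpa [map_add] using h2
  have hc : (starRingEnd ℂ) z = -1 - z := by linear_combination h2' - hzz
  rw [hc] at hzz
  have hq : z ^ 2 + z + 1 = 0 := by linear_combination -hzz
  have hcube : z ^ 3 = 1 := by linear_combination (z - 1) * hq
  have hn2 : n - 2 + 2 = n := by omega
  have hpow : z ^ (n - 2) * z ^ 2 = z + 1 := by rw [← pow_add, hn2]; exact h1
  have h4 : z ^ (n - 2) * z ^ 2 = (-1) * z ^ 2 := by
    rw [hpow]; linear_combination hq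
  have h5 : z ^ (n - 2) = -1 := mul_right_cancel₀ (pow_ne_zero 2 hz0) h4
  have h6 : (z ^ (n - 2)) ^ 3 = (z ^ 3) ^ (n - 2) := by
    rw [← pow_mul, ← pow_mul, Nat.mul_comm]
  rw [h5, hcube, one_pow] at h6
  norm_num at h6
end

section
/- Let p ∈ ℤ[x] be monic of degree n ≥ 2 whose splitting field K has Galois group of odd order over ℚ. If q ∈ ℤ[x] is a monic irreducible polynomial whose splitting field is contained in K and q has a root λ with |λ| = 1, then q is linear and λ = ±1. -/
set_option maxHeartbeats 1000000
set_option synthInstance.maxHeartbeats 400000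


open Polynomial

/-- Let `p ∈ ℤ[x]` be monic of degree `n ≥ 2` whose splitting field over `ℚ` has
Galois group of odd order.  If `q ∈ ℤ[x]` is monic irreducible, splits in that
splitting field, and has a root `λ` of modulus one, then `q` is linear and
`λ = ±1`. -/
theorem stmt_9 (p q : Polynomial ℤ) (n : ℕ) (hn : 2 ≤ n)
    (hmonic : p.Monic) (hdeg : p.natDegree = n)
    (hodd : Odd (Fintype.card ((p.map (Int.castRingHom ℚ)).SplittingField ≃ₐ[ℚ]
      (p.map (Int.castRingHom ℚ)).SplittingField)))
    (hqmonic : q.Monic) (hqirr : Irreducible q)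
    (hsplit : Polynomial.Splits
      ((q.map (Int.castRingHom ℚ)).map
        (algebraMap ℚ (p.map (Int.castRingHom ℚ)).SplittingField)))
    (lam : ℂ) (hroot : Polynomial.aeval lam q = 0)
    (habs : ‖lam‖ = 1) :
    q.natDegree = 1 ∧ (lam = 1 ∨ lam = -1) := by
  set K := (p.map (Int.castRingHom ℚ)).SplittingField with hK
  set q' : ℚ[X] := q.map (Int.castRingHom ℚ) with hq'
  have hq'monic : q'.Monic := hqmonic.map _
  have hq'ne : q' ≠ 0 := hq'monic.ne_zero
  have hq'irr : Irreducible q' :=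
    (Polynomial.IsPrimitive.Int.irreducible_iff_irreducible_map_cast
      hqmonic.isPrimitive).mp hqirr
  -- λ is a root of q'
  have hroot' : Polynomial.aeval lam q' = 0 := by
    rw [hq', show Int.castRingHom ℚ = algebraMap ℤ ℚ from rfl,
      Polynomial.aeval_map_algebraMap]
    exact hroot
  have hlam_mem : lam ∈ q'.rootSet ℂ := by
    rw [Polynomial.mem_rootSet]
    exact ⟨hq'ne, hroot'⟩
  -- The intermediate field M = ℚ(roots of q') of ℂ
  set M : IntermediateField ℚ ℂ := IntermediateField.adjoin ℚ (q'.rootSet ℂ) with hM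
  have hMsplit : q'.IsSplittingField ℚ M :=
    IntermediateField.adjoin_rootSet_isSplittingField
      (IsAlgClosed.splits (q'.map (algebraMap ℚ ℂ)))
  haveI : q'.IsSplittingField ℚ M := hMsplit
  haveI : FiniteDimensional ℚ M := Polynomial.IsSplittingField.finiteDimensional M q'
  haveI : Normal ℚ M := Normal.of_isSplittingField (p := q')
  haveI : IsGalois ℚ M := IsGalois.mk
  haveI : Normal ℚ K := Normal.of_isSplittingField (p := p.map (Int.castRingHom ℚ))
    (hFEp := Polynomial.IsSplittingField.splittingField _)
  haveI : IsGalois ℚ K := IsGalois.mk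
  -- M embeds into K, so finrank ℚ M divides finrank ℚ K, which is odd
  have hoddK : Odd (Module.finrank ℚ K) := by
    rwa [← Nat.card_eq_fintype_card, IsGalois.card_aut_eq_finrank] at hodd
  let f : M →ₐ[ℚ] K := Polynomial.IsSplittingField.lift M q' hsplit
  have hdvd : Module.finrank ℚ M ∣ Module.finrank ℚ K := by
    have h1 : Module.finrank ℚ M = Module.finrank ℚ f.fieldRange :=
      (AlgEquiv.ofInjectiveField f).toLinearEquiv.finrank_eq
    have h2 : Module.finrank ℚ f.fieldRange * Module.finrank f.fieldRange K
        = Module.finrank ℚ K := Module.finrank_mul_finrank ℚ f.fieldRange K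
    exact h1 ▸ ⟨_, h2.symm⟩
  have hoddM : Odd (Fintype.card (M ≃ₐ[ℚ] M)) := by
    rw [← Nat.card_eq_fintype_card, IsGalois.card_aut_eq_finrank]
    obtain ⟨k, hk⟩ := hdvd
    rw [Nat.odd_iff] at hoddK ⊢
    rw [hk, Nat.mul_mod] at hoddK
    rcases Nat.mod_two_eq_zero_or_one (Module.finrank ℚ ↥M) with h | h
    · rw [h] at hoddK; simp at hoddK
    · exact h
  -- complex conjugation restricts to an automorphism of M
  let c : ℂ ≃ₐ[ℚ] ℂ := (Complex.conjAe.restrictScalars ℚ)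
  have hmapsto : ∀ x ∈ q'.rootSet ℂ, c x ∈ q'.rootSet ℂ := fun x hx => by
    rw [Polynomial.mem_rootSet] at hx ⊢
    refine ⟨hx.1, ?_⟩
    have h := Polynomial.aeval_algHom_apply c.toAlgHom x q'
    rw [hx.2, map_zero] at h
    simpa using h
  have himg : c.toAlgHom '' (q'.rootSet ℂ) = q'.rootSet ℂ := by
    apply Set.Subset.antisymm
    · rintro y ⟨x, hx, rfl⟩; exact hmapsto x hx
    · intro x hx
      refine ⟨c x, hmapsto x hx, ?_⟩
      simp [c, Complex.conjAe]
  have hmapM : M.map c.toAlgHom = M := by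
    rw [hM, IntermediateField.adjoin_map, himg]
  let σ : M ≃ₐ[ℚ] M :=
    (IntermediateField.intermediateFieldMap c M).trans
      (IntermediateField.equivOfEq hmapM)
  have hσ_apply : ∀ x : M, (σ x : ℂ) = c (x : ℂ) := fun x => rfl
  have hσ2 : σ ^ 2 = 1 := by
    ext x
    have : (σ (σ x) : ℂ) = c (c (x : ℂ)) := by rw [hσ_apply, hσ_apply]
    have h2 : c (c (x : ℂ)) = (x : ℂ) := Complex.conj_conj _
    have : ((σ ^ 2) x : ℂ) = (x : ℂ) := by
      rw [pow_two]
      simpa [this] using h2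
    simpa using congrArg Subtype.val (Subtype.ext this)
  have hσ1 : σ = 1 := by
    have h1 : orderOf σ ∣ 2 := orderOf_dvd_of_pow_eq_one hσ2
    have h2 : orderOf σ ∣ Fintype.card (M ≃ₐ[ℚ] M) := orderOf_dvd_card
    have h3 : Nat.gcd 2 (Fintype.card (M ≃ₐ[ℚ] M)) = 1 :=
      Nat.coprime_two_left.mpr hoddM
    have h4 : orderOf σ ∣ 1 := h3 ▸ Nat.dvd_gcd h1 h2
    exact orderOf_eq_one_iff.mp (Nat.eq_one_of_dvd_one h4)
  -- hence λ is real
  have hlamM : lam ∈ M := hM ▸ IntermediateField.subset_adjoin ℚ _ hlam_mem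
  have hconj : c lam = lam := by
    have h : σ ⟨lam, hlamM⟩ = ⟨lam, hlamM⟩ := by rw [hσ1]; rfl
    have := congrArg Subtype.val h
    rw [hσ_apply] at this
    exact this
  have hreal : (starRingEnd ℂ) lam = lam := hconj
  have him0 : lam.im = 0 := Complex.conj_eq_iff_im.mp hreal
  -- so λ = ±1
  have hre : lam.re = 1 ∨ lam.re = -1 := by
    have : |lam.re| = 1 := by
      have := Complex.abs_re_eq_norm.mpr him0
      rw [habs] at this; exact this
    rcases abs_eq (by norm_num : (0:ℝ) ≤ 1) |>.mp this with h | h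
    · exact Or.inl h
    · exact Or.inr h
  have hlam1 : lam = 1 ∨ lam = -1 := by
    rcases hre with h | h
    · left; exact Complex.ext (by simp [h]) (by simp [him0])
    · right; exact Complex.ext (by simp [h]) (by simp [him0])
  refine ⟨?_, hlam1⟩
  -- q has an integer root ±1, and is irreducible, so it has degree 1
  have : ∃ a : ℤ, q.IsRoot a := by
    rcases hlam1 with h | h
    · refine ⟨1, ?_⟩
      have hv : Polynomial.aeval (1 : ℂ) q = 0 := h ▸ hroot
      rw [Polynomial.aeval_def, Polynomial.eval₂_eq_eval_map] at hv
      have h2 : ((q.eval 1 : ℤ) : ℂ) = 0 := by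
        have h3 := Polynomial.eval_intCast_map (Int.castRingHom ℂ) q 1
        rw [algebraMap_int_eq] at hv
        simp only [Int.cast_id, Int.cast_one, eq_intCast] at h3
        rw [← h3]; exact hv
      exact_mod_cast h2
    · refine ⟨-1, ?_⟩
      have hv : Polynomial.aeval (-1 : ℂ) q = 0 := h ▸ hroot
      rw [Polynomial.aeval_def, Polynomial.eval₂_eq_eval_map] at hv
      have h2 : ((q.eval (-1) : ℤ) : ℂ) = 0 := by
        have h3 := Polynomial.eval_intCast_map (Int.castRingHom ℂ) q (-1)
        rw [algebraMap_int_eq] at hv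
        simp only [Int.cast_id, Int.cast_neg, Int.cast_one, eq_intCast] at h3
        rw [← h3]; exact hv
      exact_mod_cast h2
  obtain ⟨a, ha⟩ := this
  have := Polynomial.degree_eq_one_of_irreducible_of_root hqirr ha
  exact Polynomial.natDegree_eq_of_degree_eq_some this
end

section
/- Let α₁,...,αₙ be the roots of a monic separable polynomial p₁ ∈ ℤ[x] of degree n ≥ 3 with all αᵢ distinct. If the polynomial p₂(x) = ∏_{1 ≤ j < i ≤ n} (x - αᵢαⱼ) factors over ℤ as a power rˢ of a single irreducible monic polynomial r, then deg r ≥ n - 1. -/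
open Polynomial

/-- Let `α₁,…,αₙ` be the (distinct) roots of a monic separable `p₁ ∈ ℤ[x]` of
degree `n ≥ 3`.  If `p₂(x) = ∏_{j<i}(x - αᵢαⱼ)` factors over `ℤ` as a power
`rˢ` of a single monic irreducible polynomial `r`, then `deg r ≥ n - 1`. -/
theorem stmt_10 (n : ℕ) (hn : 3 ≤ n) (p₁ : Polynomial ℤ) (hmonic : p₁.Monic)
    (hsep : p₁.Separable) (hdeg : p₁.natDegree = n)
    (α : Fin n → ℂ) (hinj : Function.Injective α)
    (hroots : p₁.map (Int.castRingHom ℂ) = ∏ i, (X - C (α i)))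
    (r : Polynomial ℤ) (s : ℕ) (hs : 1 ≤ s) (hrmonic : r.Monic)
    (hrirr : Irreducible r)
    (hfac : (r ^ s).map (Int.castRingHom ℂ) =
      ∏ ij ∈ Finset.univ.filter (fun ij : Fin n × Fin n => ij.2 < ij.1),
        (X - C (α ij.1 * α ij.2))) :
    n - 1 ≤ r.natDegree := by
  -- pick an index with nonzero root
  obtain ⟨a, ha⟩ : ∃ a : Fin n, α a ≠ 0 := by
    by_contra h
    push_neg at h
    have h0 := h ⟨0, by omega⟩
    have h1 := h ⟨1, by omega⟩
    have := hinj (h0.trans h1.symm)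
    simp [Fin.ext_iff] at this
  set R : Polynomial ℂ := r.map (Int.castRingHom ℂ) with hR
  have hRne : R ≠ 0 := (hrmonic.map (Int.castRingHom ℂ)).ne_zero
  have hroot : ∀ j, j ≠ a → R.eval (α a * α j) = 0 := by
    intro j hj
    have hpow : ((r ^ s).map (Int.castRingHom ℂ)).eval (α a * α j) = 0 := by
      rw [hfac, eval_prod]
      rcases lt_or_gt_of_ne hj with hlt | hlt
      · apply Finset.prod_eq_zero (i := ((a, j) : Fin n × Fin n))
        · simp [hlt]
        · simp [mul_comm]
      · apply Finset.prod_eq_zero (i := ((j, a) : Fin n × Fin n))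
        · simp [hlt]
        · simp [mul_comm]
    rw [Polynomial.map_pow, eval_pow] at hpow
    exact pow_eq_zero_iff (by omega) |>.mp hpow
  have hinj2 : Function.Injective (fun j : Fin n => α a * α j) := by
    intro x y hxy
    exact hinj (mul_left_cancel₀ ha hxy)
  have hsub : (Finset.univ.erase a).image (fun j : Fin n => α a * α j)
      ⊆ R.roots.toFinset := by
    intro x hx
    simp only [Finset.mem_image, Finset.mem_erase] at hx
    obtain ⟨j, ⟨hj, -⟩, rfl⟩ := hx
    simp only [Multiset.mem_toFinset, mem_roots hRne]
    exact hroot j hj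
  have h1 : ((Finset.univ.erase a).image (fun j : Fin n => α a * α j)).card = n - 1 := by
    rw [Finset.card_image_of_injective _ hinj2, Finset.card_erase_of_mem (Finset.mem_univ a)]
    simp
  calc n - 1 = _ := h1.symm
    _ ≤ R.roots.toFinset.card := Finset.card_le_card hsub
    _ ≤ Multiset.card R.roots := R.roots.toFinset_card_le
    _ ≤ R.natDegree := R.card_roots'
    _ = r.natDegree := hrmonic.natDegree_map _
end

section
/- Let α₁,...,αₙ (n ≥ 3) be the roots of a monic polynomial p₁ ∈ ℤ[x] of degree n with constant term (-1)^n, and suppose the set of roots has full rank (the only integer relations ∏αⱼ^{dⱼ} = 1 have all dⱼ equal). Then for 2 ≤ i, any monic factor q ∈ ℤ[x] of the polynomial pᵢ whose roots are products of i of the roots (with multiplicity, corresponding to degree-i words) has degree k satisfying k·i = n·d for some positive integer d. In particular n/gcd(n,i) divides k. -/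
open Polynomial

private lemma mprod_swap {β ι γ : Type*} [CommMonoid γ] (M : Multiset β) (s : Finset ι)
    (f : β → ι → γ) :
    (M.map (fun m => ∏ j ∈ s, f m j)).prod = ∏ j ∈ s, (M.map (fun m => f m j)).prod := by
  induction M using Multiset.induction with
  | empty => simp
  | cons a t ih => simp [ih, Finset.prod_mul_distrib]

private lemma msum_swap {β ι : Type*} (M : Multiset β) (s : Finset ι)
    (f : β → ι → ℕ) :
    (M.map (fun m => ∑ j ∈ s, f m j)).sum = ∑ j ∈ s, (M.map (fun m => f m j)).sum := by
  induction M using Multiset.induction with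
  | empty => simp
  | cons a t ih => simp [ih, Finset.sum_add_distrib]

private lemma mprod_pow {β γ : Type*} [CommMonoid γ] (M : Multiset β) (a : γ) (g : β → ℕ) :
    (M.map (fun m => a ^ g m)).prod = a ^ (M.map g).sum := by
  induction M using Multiset.induction with
  | empty => simp
  | cons b t ih => simp [ih, pow_add]

/-- Let `α₁,…,αₙ` (`n ≥ 3`) be the roots of a monic `p₁ ∈ ℤ[x]` of degree `n`
with constant term `(-1)ⁿ`, and suppose the set of roots has full rank.  Then any
monic `q ∈ ℤ[x]` whose roots are products of `i` of the roots (degree-`i` words,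
`i ≥ 2`) has degree `k` satisfying `k·i = n·d` for some positive integer `d`; in
particular `n / gcd(n,i)` divides `k`. -/
theorem stmt_11 (n : ℕ) (hn : 3 ≤ n) (p₁ : Polynomial ℤ) (hmonic : p₁.Monic)
    (hdeg : p₁.natDegree = n) (hconst : p₁.coeff 0 = (-1) ^ n)
    (α : Fin n → ℂ)
    (hroots : p₁.map (Int.castRingHom ℂ) = ∏ j, (X - C (α j)))
    (hfr : ∀ d : Fin n → ℤ, (∏ j, α j ^ d j) = 1 → ∀ j k, d j = d k)
    (i : ℕ) (hi : 2 ≤ i)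
    (q : Polynomial ℤ) (hqmonic : q.Monic)
    (M : Multiset (Fin i → Fin n)) (hM : M ≠ 0)
    (hq : q.map (Int.castRingHom ℂ) =
      (M.map (fun m => X - C (∏ t, α (m t)))).prod) :
    (∃ d : ℕ, 0 < d ∧ q.natDegree * i = n * d) ∧
    (n / Nat.gcd n i) ∣ q.natDegree := by
  classical
  have halg : algebraMap ℤ ℂ = Int.castRingHom ℂ := by
    ext x; simp
  -- each root is an algebraic integer
  have hα : ∀ j, IsIntegral ℤ (α j) := by
    intro j
    refine ⟨p₁, hmonic, ?_⟩
    rw [eval₂_eq_eval_map, halg, hroots, eval_prod]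
    exact Finset.prod_eq_zero (Finset.mem_univ j) (by simp)
  -- product of all roots is 1
  have hprod1 : (∏ j, α j) = 1 := by
    have h0 : ((p₁.coeff 0 : ℤ) : ℂ) = (∏ j, (X - C (α j))).eval 0 := by
      rw [← hroots, ← coeff_zero_eq_eval_zero, coeff_map]; rfl
    rw [hconst] at h0
    rw [eval_prod] at h0
    simp only [eval_sub, eval_X, eval_C, zero_sub] at h0
    have hneg : (∏ x : Fin n, -α x) = (-1 : ℂ) ^ n * ∏ x, α x := by
      calc (∏ x : Fin n, -α x) = ∏ x : Fin n, (-1 : ℂ) * α x := by simp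
        _ = (∏ _x : Fin n, (-1 : ℂ)) * ∏ x, α x := Finset.prod_mul_distrib
        _ = (-1 : ℂ) ^ n * ∏ x, α x := by simp
    rw [hneg] at h0
    push_cast at h0
    have hne : ((-1 : ℂ)) ^ n ≠ 0 := pow_ne_zero _ (by norm_num)
    have h0' : (-1 : ℂ) ^ n * 1 = (-1 : ℂ) ^ n * ∏ x, α x := by rw [mul_one]; exact h0
    exact (mul_left_cancel₀ hne h0').symm
  -- letter counts
  set e : (Fin i → Fin n) → Fin n → ℕ :=
    fun m j => (Finset.univ.filter (fun t => m t = j)).card with he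
  set c : Fin n → ℕ := fun j => (M.map (fun m => e m j)).sum with hc
  -- each word product as powers of roots
  have hword : ∀ m : Fin i → Fin n, (∏ t, α (m t)) = ∏ j, α j ^ e m j := by
    intro m
    rw [← Finset.prod_fiberwise Finset.univ m (fun t => α (m t))]
    refine Finset.prod_congr rfl fun j _ => ?_
    have hcg : ∀ t ∈ Finset.univ.filter (fun t => m t = j), α (m t) = α j :=
      fun t ht => by rw [(Finset.mem_filter.mp ht).2]
    rw [Finset.prod_congr rfl hcg, Finset.prod_const]
  have hwordsum : ∀ m : Fin i → Fin n, (∑ j, e m j) = i := by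
    intro m
    rw [← Finset.card_eq_sum_card_fiberwise (fun t _ => Finset.mem_univ (m t))]
    simp
  set P : ℂ := ∏ j, α j ^ c j with hP
  have hPM : (M.map (fun m => ∏ t, α (m t))).prod = P := by
    have : (M.map (fun m => ∏ t, α (m t))) = (M.map (fun m => ∏ j, α j ^ e m j)) := by
      exact Multiset.map_congr rfl (fun m _ => hword m)
    rw [this, mprod_swap]
    refine Finset.prod_congr rfl fun j _ => ?_
    rw [mprod_pow]
  -- k = card M
  set k := q.natDegree with hk
  have hkcard : k = Multiset.card M := by
    have h1 : (q.map (Int.castRingHom ℂ)).natDegree = k := by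
      rw [← halg]; exact hqmonic.natDegree_map _
    rw [hq] at h1
    rw [natDegree_multiset_prod_of_monic] at h1
    · rw [Multiset.map_map] at h1
      simp only [Function.comp_def, natDegree_X_sub_C] at h1
      simpa using h1.symm
    · intro f hf
      rw [Multiset.mem_map] at hf
      obtain ⟨m, _, rfl⟩ := hf
      exact monic_X_sub_C _
  -- constant term
  have hcoeff : ((q.coeff 0 : ℤ) : ℂ) = (-1) ^ k * P := by
    have h0 : ((q.coeff 0 : ℤ) : ℂ) = (q.map (Int.castRingHom ℂ)).eval 0 := by
      rw [← coeff_zero_eq_eval_zero, coeff_map]; rfl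
    rw [hq, eval_multiset_prod, Multiset.map_map] at h0
    simp only [Function.comp_def, eval_sub, eval_X, eval_C, zero_sub] at h0
    have hmm : (M.map (fun m : Fin i → Fin n => -(∏ t, α (m t)))) =
        ((M.map (fun m : Fin i → Fin n => ∏ t, α (m t))).map Neg.neg) := by
      rw [Multiset.map_map]; rfl
    rw [hmm, Multiset.prod_map_neg, Multiset.card_map, hPM] at h0
    rw [h0, hkcard]
  -- a = ±1
  set a : ℤ := (-1) ^ k * q.coeff 0 with ha
  have haP : ((a : ℤ) : ℂ) = P := by
    rw [ha]
    push_cast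
    rw [hcoeff, ← mul_assoc, ← mul_pow]
    simp
  set S := ∑ j, c j with hS
  set Q : ℂ := ∏ j, α j ^ (S - c j) with hQ
  have hPQ : P * Q = 1 := by
    rw [hP, hQ, ← Finset.prod_mul_distrib]
    have : ∀ j : Fin n, j ∈ Finset.univ → α j ^ c j * α j ^ (S - c j) = α j ^ S := by
      intro j _
      rw [← pow_add]
      congr 1
      exact Nat.add_sub_cancel' (Finset.single_le_sum (fun j _ => Nat.zero_le (c j))
        (Finset.mem_univ j))
    rw [Finset.prod_congr rfl this, Finset.prod_pow, hprod1, one_pow]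
  have hQint : IsIntegral ℤ Q := by
    have : Q ∈ integralClosure ℤ ℂ := by
      refine Subalgebra.prod_mem _ fun j _ => ?_
      exact Subalgebra.pow_mem _ (hα j) _
    exact this
  have hane : a ≠ 0 := by
    intro h
    have h1 := hPQ
    rw [← haP, h] at h1
    simp at h1
  have hQrat : algebraMap ℚ ℂ ((a : ℚ)⁻¹) = Q := by
    have h1 : Q * ((a : ℤ) : ℂ) = 1 := by rw [mul_comm, haP]; exact hPQ
    rw [map_inv₀, map_intCast, eq_comm]
    exact eq_inv_of_mul_eq_one_left h1
  have hQint' : IsIntegral ℤ ((a : ℚ)⁻¹) := by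
    apply IsIntegral.tower_bot (algebraMap ℚ ℂ).injective
    rw [hQrat]; exact hQint
  obtain ⟨b, hb⟩ := IsIntegrallyClosed.isIntegral_iff.mp hQint'
  have hab : a * b = 1 := by
    have haQ : ((a : ℚ)) ≠ 0 := Int.cast_ne_zero.mpr hane
    have : ((a * b : ℤ) : ℚ) = 1 := by
      push_cast
      rw [show ((b : ℤ) : ℚ) = (a : ℚ)⁻¹ from hb]
      field_simp
    exact_mod_cast this
  have ha1 : a = 1 ∨ a = -1 := Int.isUnit_iff.mp (IsUnit.of_mul_eq_one (a := a) b hab)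
  have hP2 : P ^ 2 = 1 := by
    rw [← haP]
    rcases ha1 with h | h <;> rw [h] <;> norm_num
  -- full rank: all counts equal
  have hceq : ∀ j j' : Fin n, c j = c j' := by
    have h1 : (∏ j, α j ^ ((c j * 2 : ℕ) : ℤ)) = 1 := by
      have : ∀ j : Fin n, α j ^ ((c j * 2 : ℕ) : ℤ) = (α j ^ c j) ^ 2 := by
        intro j
        rw [zpow_natCast, pow_mul]
      rw [Finset.prod_congr rfl (fun j _ => this j), Finset.prod_pow, ← hP, hP2]
    intro j j'
    have := hfr (fun j => ((c j * 2 : ℕ) : ℤ)) h1 j j'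
    have h2 : c j * 2 = c j' * 2 := by exact_mod_cast this
    omega
  set j0 : Fin n := ⟨0, by omega⟩ with hj0
  -- sum of counts
  have hsum : S = k * i := by
    rw [hS, hc]
    rw [← msum_swap]
    rw [Multiset.map_congr rfl (fun m _ => hwordsum m)]
    simp [hkcard, mul_comm]
  have hsum' : S = n * c j0 := by
    rw [hS, Finset.sum_congr rfl (fun j _ => hceq j j0), Finset.sum_const]
    simp [mul_comm]
  have hkey : k * i = n * c j0 := by rw [← hsum, hsum']
  have hkpos : 0 < k := by
    rw [hkcard]
    exact Multiset.card_pos.mpr hM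
  have hc0pos : 0 < c j0 := by
    rcases Nat.eq_zero_or_pos (c j0) with h | h
    · exfalso
      rw [h, mul_zero] at hkey
      rcases Nat.mul_eq_zero.mp hkey with h' | h' <;> omega
    · exact h
  refine ⟨⟨c j0, hc0pos, hkey⟩, ?_⟩
  have hg : 0 < Nat.gcd n i := Nat.gcd_pos_of_pos_left _ (by omega)
  have hn' : n = Nat.gcd n i * (n / Nat.gcd n i) :=
    (Nat.mul_div_cancel' (Nat.gcd_dvd_left n i)).symm
  have hi' : i = Nat.gcd n i * (i / Nat.gcd n i) :=
    (Nat.mul_div_cancel' (Nat.gcd_dvd_right n i)).symm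
  have hcop : (n / Nat.gcd n i).Coprime (i / Nat.gcd n i) := Nat.coprime_div_gcd_div_gcd hg
  have hkey2 : k * (i / Nat.gcd n i) = (n / Nat.gcd n i) * c j0 := by
    apply Nat.eq_of_mul_eq_mul_left hg
    calc Nat.gcd n i * (k * (i / Nat.gcd n i))
        = k * (Nat.gcd n i * (i / Nat.gcd n i)) := by ring
      _ = k * i := by rw [← hi']
      _ = n * c j0 := hkey
      _ = (Nat.gcd n i * (n / Nat.gcd n i)) * c j0 := by rw [← hn']
      _ = Nat.gcd n i * ((n / Nat.gcd n i) * c j0) := by ring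
  exact hcop.dvd_of_dvd_mul_right ⟨c j0, hkey2⟩
end

section
/- Let α₁,...,αₙ (n ≥ 3) be the roots of a monic polynomial in ℤ[x] with constant term (-1)^n, none a root of unity, and suppose the set of roots has full rank. Then the products αᵢαⱼ for 1 ≤ j < i ≤ n are pairwise distinct; consequently p₂(x) = ∏_{j<i}(x - αᵢαⱼ) has no repeated roots and cannot equal rˢ for an irreducible r with s ≥ 2. -/
open Polynomial

/-- Let `α₁,…,αₙ` (`n ≥ 3`) be the roots of a monic integer polynomial with
constant term `(-1)ⁿ`, none a root of unity, with the set of roots of full rank.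
Then the products `αᵢαⱼ` (`j < i`) are pairwise distinct; consequently
`p₂(x) = ∏_{j<i}(x - αᵢαⱼ)` has no repeated roots and cannot equal `rˢ` for an
irreducible `r ∈ ℤ[x]` with `s ≥ 2`. -/
theorem stmt_12 (n : ℕ) (hn : 3 ≤ n) (p₁ : Polynomial ℤ) (hmonic : p₁.Monic)
    (hdeg : p₁.natDegree = n) (hconst : p₁.coeff 0 = (-1) ^ n)
    (α : Fin n → ℂ)
    (hroots : p₁.map (Int.castRingHom ℂ) = ∏ j, (X - C (α j)))
    (hnru : ∀ j, ∀ k : ℕ, 0 < k → α j ^ k ≠ 1)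
    (hfr : ∀ d : Fin n → ℤ, (∏ j, α j ^ d j) = 1 → ∀ j k, d j = d k) :
    (∀ i j k l : Fin n, j < i → l < k → α i * α j = α k * α l → i = k ∧ j = l) ∧
    Squarefree (∏ ij ∈ Finset.univ.filter (fun ij : Fin n × Fin n => ij.2 < ij.1),
      (X - C (α ij.1 * α ij.2))) ∧
    ∀ r : Polynomial ℤ, ∀ s : ℕ, 2 ≤ s → Irreducible r →
      (r ^ s).map (Int.castRingHom ℂ) ≠
        ∏ ij ∈ Finset.univ.filter (fun ij : Fin n × Fin n => ij.2 < ij.1),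
          (X - C (α ij.1 * α ij.2)) := by
  -- all roots are nonzero
  have hprod1 : (∏ j, α j) = 1 := by
    have h0 : ((p₁.map (Int.castRingHom ℂ)).eval 0) = (∏ j, (0 - α j)) := by
      rw [hroots, Polynomial.eval_prod]; simp
    rw [Polynomial.eval_map, Polynomial.eval₂_at_zero, hconst] at h0
    have h0' : ((-1 : ℂ) ^ n) * 1 = ((-1 : ℂ) ^ n) * ∏ j, α j := by
      rw [mul_one]
      calc ((-1 : ℂ) ^ n) = (Int.castRingHom ℂ) ((-1) ^ n) := by simp
        _ = ∏ x : Fin n, (0 - α x) := h0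
        _ = ∏ x : Fin n, ((-1) * α x) := by
            refine Finset.prod_congr rfl fun x _ => by ring
        _ = ((-1 : ℂ) ^ n) * ∏ j, α j := by
            rw [Finset.prod_mul_distrib, Finset.prod_const, Finset.card_univ,
              Fintype.card_fin]
    exact (mul_left_cancel₀ (pow_ne_zero _ (by norm_num)) h0').symm
  have hne : ∀ t, α t ≠ 0 := by
    intro t
    have := Finset.prod_ne_zero_iff.mp (hprod1 ▸ one_ne_zero)
    exact this t (Finset.mem_univ t)
  -- key distinctness
  have key : ∀ i j k l : Fin n, j < i → l < k → α i * α j = α k * α l →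
      i = k ∧ j = l := by
    intro i j k l hji hlk heq
    set d : Fin n → ℤ := fun t =>
      (if t = i then 1 else 0) + (if t = j then 1 else 0)
        - (if t = k then 1 else 0) - (if t = l then 1 else 0) with hd
    have h1 : ∀ m : Fin n, (∏ t, α t ^ (if t = m then (1:ℤ) else 0)) = α m := by
      intro m
      rw [Finset.prod_eq_single m (fun t _ ht => by simp [ht]) (by simp)]
      simp
    have hprod : (∏ t, α t ^ d t) = 1 := by
      have : (∏ t, α t ^ d t) = (α i * α j) / (α k * α l) := by
        simp only [hd, sub_sub, ← zpow_add₀ (hne _)]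
        rw [show (∏ t, α t ^ ((if t = i then (1:ℤ) else 0) + (if t = j then 1 else 0)
            - ((if t = k then 1 else 0) + (if t = l then 1 else 0))))
          = ∏ t, (α t ^ ((if t = i then (1:ℤ) else 0)) * α t ^ ((if t = j then (1:ℤ) else 0)))
            / (α t ^ ((if t = k then (1:ℤ) else 0)) * α t ^ ((if t = l then (1:ℤ) else 0))) from
          Finset.prod_congr rfl fun t _ => by
            rw [zpow_sub₀ (hne t), zpow_add₀ (hne t), zpow_add₀ (hne t)]]
        rw [Finset.prod_div_distrib, Finset.prod_mul_distrib, Finset.prod_mul_distrib,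
          h1 i, h1 j, h1 k, h1 l]
      rw [this, heq, div_self (mul_ne_zero (hne k) (hne l))]
    have hconst' := hfr d hprod
    -- all values of d are zero
    have hsum : (∑ t, d t) = 0 := by
      simp only [hd]
      rw [Finset.sum_sub_distrib, Finset.sum_sub_distrib, Finset.sum_add_distrib]
      simp [Finset.sum_ite_eq']
    have hall : ∀ t, d t = 0 := by
      intro t
      have : (∑ s, d s) = ∑ _s : Fin n, d t := Finset.sum_congr rfl fun s _ => hconst' s t
      rw [hsum, Finset.sum_const, Finset.card_univ, Fintype.card_fin] at this
      have hn0 : (n : ℤ) ≠ 0 := by positivity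
      have := this.symm
      rw [nsmul_eq_mul] at this
      exact (mul_eq_zero.mp this).resolve_left hn0
    have hji' : j ≠ i := ne_of_lt hji
    have hlk' : l ≠ k := ne_of_lt hlk
    rcases eq_or_ne i k with hik | hik
    · refine ⟨hik, ?_⟩
      by_contra hjl
      have hjk : j ≠ k := hik ▸ hji'
      have := hall j
      simp [hd, hji', hjk, hjl] at this
    · exfalso
      rcases eq_or_ne i l with hil | hil
      · -- i = l < k ; consider d k
        have hki : k ≠ i := (hil ▸ hlk).ne'
        have := hall k
        simp [hd, hki, hlk'.symm] at this
        have hkj : k = j := by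
          by_contra h
          simp [h] at this
        subst hkj
        exact absurd (lt_trans hji (hil ▸ hlk)) (lt_irrefl k)
      · have := hall i
        simp [hd, hji'.symm, hik, hil] at this
  refine ⟨key, ?_, ?_⟩
  · -- squarefree
    have hsep : (∏ ij ∈ Finset.univ.filter (fun ij : Fin n × Fin n => ij.2 < ij.1),
        (X - C (α ij.1 * α ij.2))).Separable := by
      rw [Polynomial.separable_prod_X_sub_C_iff']
      intro x hx y hy hxy
      simp only [Finset.mem_filter] at hx hy
      obtain ⟨h1, h2⟩ := key x.1 x.2 y.1 y.2 hx.2 hy.2 hxy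
      exact Prod.ext h1 h2
    exact hsep.squarefree
  · intro r s hs hr heq
    have hsf : Squarefree ((r.map (Int.castRingHom ℂ)) ^ s) := by
      rw [← Polynomial.map_pow, heq]
      have hsep : (∏ ij ∈ Finset.univ.filter (fun ij : Fin n × Fin n => ij.2 < ij.1),
          (X - C (α ij.1 * α ij.2))).Separable := by
        rw [Polynomial.separable_prod_X_sub_C_iff']
        intro x hx y hy hxy
        simp only [Finset.mem_filter] at hx hy
        obtain ⟨h1, h2⟩ := key x.1 x.2 y.1 y.2 hx.2 hy.2 hxy
        exact Prod.ext h1 h2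
      exact hsep.squarefree
    have hu : IsUnit (r.map (Int.castRingHom ℂ)) := by
      apply hsf _
      calc r.map (Int.castRingHom ℂ) * r.map (Int.castRingHom ℂ)
          = (r.map (Int.castRingHom ℂ)) ^ 2 := (sq _).symm
        _ ∣ (r.map (Int.castRingHom ℂ)) ^ s := pow_dvd_pow _ hs
    -- then RHS is a unit, but X - C _ divides it
    have hru : IsUnit ((r ^ s).map (Int.castRingHom ℂ)) := by
      rw [Polynomial.map_pow]; exact hu.pow s
    rw [heq] at hru
    have hmem : (⟨⟨1, by omega⟩, ⟨0, by omega⟩⟩ : Fin n × Fin n) ∈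
        Finset.univ.filter (fun ij : Fin n × Fin n => ij.2 < ij.1) := by
      simp [Fin.mk_lt_mk]
    have hdvd : (X - C (α ⟨1, by omega⟩ * α ⟨0, by omega⟩)) ∣
        ∏ ij ∈ Finset.univ.filter (fun ij : Fin n × Fin n => ij.2 < ij.1),
          (X - C (α ij.1 * α ij.2)) :=
          Finset.dvd_prod_of_mem (fun ij : Fin n × Fin n => X - C (α ij.1 * α ij.2)) (a := (⟨⟨1, by omega⟩, ⟨0, by omega⟩⟩ : Fin n × Fin n)) hmem
    exact Polynomial.not_isUnit_X_sub_C _ (isUnit_of_dvd_unit hdvd hru)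
end

section
/- Let n₁ ≥ 3 be prime and 1 < i < n₁. Let p₁ ∈ ℤ[x] be a monic irreducible polynomial of degree n₁ with constant term ±1 whose roots have full rank. Then the degree of any irreducible factor over ℤ of the polynomial pᵢ whose roots are products of i roots of p₁ (degree-i words) is a multiple of n₁. -/
open Polynomial

private lemma multiset_prod_map_prod_pow {β : Type*} {n : ℕ} (M : Multiset β) (g : Fin n → ℂ)
    (f : β → Fin n → ℕ) :
    (M.map fun m => ∏ j, g j ^ f m j).prod = ∏ j, g j ^ (M.map fun m => f m j).sum := by
  induction M using Multiset.induction with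
  | empty => simp
  | cons a s ih =>
    simp [Multiset.map_cons, Multiset.prod_cons, Multiset.sum_cons, ih, pow_add,
      Finset.prod_mul_distrib]

private lemma multiset_sum_map_sum {β : Type*} {n : ℕ} (M : Multiset β)
    (f : β → Fin n → ℕ) :
    (∑ j, (M.map fun m => f m j).sum) = (M.map fun m => ∑ j, f m j).sum := by
  induction M using Multiset.induction with
  | empty => simp
  | cons a s ih => simp [Multiset.map_cons, Multiset.sum_cons, ← ih, Finset.sum_add_distrib]

/-- Let `n₁ ≥ 3` be prime and `1 < i < n₁`.  Let `p₁ ∈ ℤ[x]` be monic irreducible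
of degree `n₁` with constant term `±1` whose set of roots has full rank.  Then
the degree of any irreducible factor over `ℤ` of the polynomial whose roots are
products of `i` roots of `p₁` (degree-`i` words) is a multiple of `n₁`. -/
theorem stmt_13 (n₁ : ℕ) (hprime : n₁.Prime) (hn : 3 ≤ n₁)
    (i : ℕ) (hi1 : 1 < i) (hi2 : i < n₁)
    (p₁ : Polynomial ℤ) (hmonic : p₁.Monic) (hirr : Irreducible p₁)
    (hdeg : p₁.natDegree = n₁)
    (hconst : p₁.coeff 0 = 1 ∨ p₁.coeff 0 = -1)
    (α : Fin n₁ → ℂ)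
    (hroots : p₁.map (Int.castRingHom ℂ) = ∏ j, (X - C (α j)))
    (hfr : ∀ d : Fin n₁ → ℤ, (∏ j, α j ^ d j) = 1 → ∀ j k, d j = d k)
    (q : Polynomial ℤ) (hqmonic : q.Monic) (hqirr : Irreducible q)
    (M : Multiset (Fin i → Fin n₁)) (hM : M ≠ 0)
    (hq : q.map (Int.castRingHom ℂ) =
      (M.map (fun m => X - C (∏ t, α (m t)))).prod) :
    n₁ ∣ q.natDegree := by
  classical
  -- letter counts
  set cnt : (Fin i → Fin n₁) → Fin n₁ → ℕ :=
    fun m j => (Finset.univ.filter fun t => m t = j).card with hcnt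
  set c : Fin n₁ → ℕ := fun j => (M.map fun m => cnt m j).sum with hc
  -- each word product as power product
  have hword : ∀ m : Fin i → Fin n₁, (∏ t, α (m t)) = ∏ j, α j ^ cnt m j := by
    intro m
    rw [← Finset.prod_fiberwise_of_maps_to (fun t _ => Finset.mem_univ (m t))
      (fun t => α (m t))]
    refine Finset.prod_congr rfl fun j _ => ?_
    rw [Finset.prod_congr rfl (fun t ht => by rw [(Finset.mem_filter.1 ht).2]),
      Finset.prod_const]
  -- degree = card M
  have hdq : q.natDegree = Multiset.card M := by
    have h := congrArg natDegree hq
    rwa [hqmonic.natDegree_map,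
      show (M.map fun m => X - C (∏ t, α (m t))) =
        (M.map fun m => ∏ t, α (m t)).map fun a => X - C a from
          by rw [Multiset.map_map]; rfl,
      natDegree_multiset_prod_X_sub_C_eq_card, Multiset.card_map] at h
  -- evaluate hq at 0 : product of roots
  have hP : ((((-1 : ℤ) ^ Multiset.card M * q.coeff 0 : ℤ) : ℤ) : ℂ)
      = ∏ j, α j ^ c j := by
    have h := congrArg (eval 0) hq
    rw [eval_map, eval₂_at_zero, eval_multiset_prod, Multiset.map_map] at h
    simp only [Function.comp, eval_sub, eval_X, eval_C, zero_sub, Int.coe_castRingHom] at h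
    have h2 : (M.map fun m => (-1 : ℂ) * ∏ t, α (m t)).prod
        = ((q.coeff 0 : ℤ) : ℂ) := by
      rw [h]
      congr 1
      exact Multiset.map_congr rfl fun m _ => by ring
    rw [Multiset.prod_map_mul] at h2
    have h3 : (M.map fun _ => (-1 : ℂ)).prod = (-1 : ℂ) ^ Multiset.card M := by
      rw [Multiset.map_const', Multiset.prod_replicate]
    rw [h3] at h2
    have h4 : (M.map fun m => ∏ t, α (m t)).prod = ∏ j, α j ^ c j := by
      have := multiset_prod_map_prod_pow M α cnt
      rw [← this]
      congr 1
      exact Multiset.map_congr rfl fun m _ => hword m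
    rw [← h4]
    push_cast
    rw [← h2, ← mul_assoc, ← pow_add,
      Even.neg_one_pow ⟨Multiset.card M, rfl⟩, one_mul]
  set a : ℤ := (-1 : ℤ) ^ Multiset.card M * q.coeff 0 with ha
  -- each α j is integral with integral inverse
  have halg : ∀ j, IsIntegral ℤ (α j) := by
    intro j
    refine ⟨p₁, hmonic, ?_⟩
    have h1 : eval (α j) (p₁.map (Int.castRingHom ℂ)) = 0 := by
      rw [hroots, eval_prod]
      exact Finset.prod_eq_zero (Finset.mem_univ j) (by simp)
    rwa [eval_map,
      show Int.castRingHom ℂ = algebraMap ℤ ℂ from (algebraMap_int_eq ℂ).symm] at h1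
  have hainv : ∀ j, α j * ((-(p₁.coeff 0) : ℤ) • aeval (α j) p₁.divX) = 1 := by
    intro j
    have h1 : aeval (α j) p₁ = 0 := by
      have h0 : eval (α j) (p₁.map (Int.castRingHom ℂ)) = 0 := by
        rw [hroots, eval_prod]
        exact Finset.prod_eq_zero (Finset.mem_univ j) (by simp)
      rwa [eval_map, ← algebraMap_int_eq, ← aeval_def] at h0
    have h2 := congrArg (aeval (α j)) p₁.X_mul_divX_add
    rw [map_add, map_mul, aeval_X, aeval_C, h1] at h2
    simp only [eq_intCast] at h2
    have h3 : α j * aeval (α j) p₁.divX = -((p₁.coeff 0 : ℤ) : ℂ) := by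
      linear_combination h2
    rcases hconst with h | h
    · rw [h] at h3 ⊢
      simp only [zsmul_eq_mul]
      push_cast at h3 ⊢
      linear_combination -h3
    · rw [h] at h3 ⊢
      simp only [zsmul_eq_mul]
      push_cast at h3 ⊢
      linear_combination h3
  have hinv : ∀ j, IsIntegral ℤ (α j)⁻¹ := by
    intro j
    rw [inv_eq_of_mul_eq_one_right (hainv j)]
    have hmem : aeval (α j) p₁.divX ∈ integralClosure ℤ ℂ := by
      have hsub : Algebra.adjoin ℤ {α j} ≤ integralClosure ℤ ℂ := by
        apply Algebra.adjoin_le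
        intro x hx
        rw [Set.mem_singleton_iff] at hx
        subst hx
        exact halg j
      exact hsub (aeval_mem_adjoin_singleton ℤ (α j))
    exact Subalgebra.smul_mem _ hmem _
  have hαne : ∀ j, α j ≠ 0 := fun j => left_ne_zero_of_mul_eq_one (hainv j)
  -- a is a unit
  have hane : a ≠ 0 := by
    intro h0
    rw [h0] at hP
    have : ∃ j ∈ Finset.univ, α j ^ c j = 0 :=
      Finset.prod_eq_zero_iff.mp (by exact_mod_cast hP.symm)
    obtain ⟨j, -, hj⟩ := this
    exact hαne j (pow_eq_zero_iff'.mp hj).1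
  have hinvP : IsIntegral ℤ (((a : ℤ) : ℂ)⁻¹) := by
    have : ((a : ℤ) : ℂ)⁻¹ = ∏ j, ((α j)⁻¹) ^ c j := by
      rw [hP, ← Finset.prod_inv_distrib]
      exact Finset.prod_congr rfl fun j _ => (inv_pow _ _).symm
    rw [this]
    have : (∏ j, ((α j)⁻¹) ^ c j) ∈ integralClosure ℤ ℂ :=
      Subalgebra.prod_mem _ fun j _ => Subalgebra.pow_mem _ (hinv j) _
    exact this
  have haunit : a = 1 ∨ a = -1 := by
    have hQ : IsIntegral ℤ ((a : ℚ)⁻¹) := by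
      rw [← isIntegral_algebraMap_iff (algebraMap ℚ ℂ).injective]
      have : algebraMap ℚ ℂ ((a : ℚ)⁻¹) = ((a : ℤ) : ℂ)⁻¹ := by
        push_cast
        simp
      rwa [this]
    obtain ⟨b, hb⟩ := IsIntegrallyClosed.isIntegral_iff.mp hQ
    have hab : a * b = 1 := by
      have : ((a : ℚ)) * ((b : ℚ)) = 1 := by
        rw [show ((b : ℤ) : ℚ) = (a : ℚ)⁻¹ from hb]
        field_simp
      exact_mod_cast this
    exact Int.isUnit_iff.mp (IsUnit.of_mul_eq_one _ hab)
  -- apply full rank to squared relation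
  have hsq : (∏ j, α j ^ ((2 * c j : ℕ) : ℤ)) = 1 := by
    have : (∏ j, α j ^ c j) ^ 2 = 1 := by
      rw [← hP]
      rcases haunit with h | h <;> rw [h] <;> norm_num
    calc (∏ j, α j ^ ((2 * c j : ℕ) : ℤ)) = ∏ j, α j ^ (2 * c j) := by
          exact Finset.prod_congr rfl fun j _ => zpow_natCast _ _
      _ = (∏ j, α j ^ c j) ^ 2 := by
          rw [← Finset.prod_pow]
          exact Finset.prod_congr rfl fun j _ => by rw [← pow_mul, mul_comm]
      _ = 1 := this
  obtain ⟨j₀⟩ : Nonempty (Fin n₁) := ⟨⟨0, by omega⟩⟩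
  have hceq : ∀ j, c j = c j₀ := by
    intro j
    have := hfr (fun j => ((2 * c j : ℕ) : ℤ)) hsq j j₀
    omega
  -- count the letters
  have htot : ∑ j, c j = Multiset.card M * i := by
    rw [hc]
    rw [multiset_sum_map_sum M cnt]
    have : ∀ m : Fin i → Fin n₁, (∑ j, cnt m j) = i := by
      intro m
      have := Finset.card_eq_sum_card_fiberwise
        (fun t (_ : t ∈ Finset.univ) => Finset.mem_univ (m t))
      simpa [Finset.card_univ] using this.symm
    rw [Multiset.map_congr rfl fun m _ => this m]
    simp [Multiset.map_const', Multiset.sum_replicate, mul_comm]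
  have hmul : n₁ * c j₀ = q.natDegree * i := by
    rw [hdq, ← htot]
    rw [Finset.sum_congr rfl fun j _ => hceq j, Finset.sum_const, Finset.card_univ,
      Fintype.card_fin, smul_eq_mul]
  have hdvd : n₁ ∣ q.natDegree * i := ⟨c j₀, hmul.symm⟩
  have hcop : n₁.Coprime i :=
    (Nat.Prime.coprime_iff_not_dvd hprime).mpr
      (Nat.not_dvd_of_pos_of_lt (lt_trans Nat.zero_lt_one hi1) hi2)
  exact hcop.dvd_of_dvd_mul_right hdvd
end

section
/- Let r₁, r₂ ∈ ℤ[x] be a monic irreducible quadratic and a monic irreducible cubic, with roots α₁,α₂ and α₃,α₄,α₅ respectively, each with constant term ±1 (so the roots are algebraic units) and no roots of modulus one. Then α₁α₃ has degree 6 over ℚ; hence the sextic polynomial r₁∧r₂(x) = ∏_{i∈{1,2}, j∈{3,4,5}} (x - αᵢαⱼ) is irreducible over ℚ. -/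
open Polynomial IntermediateField Module

set_option maxHeartbeats 1600000

noncomputable section


lemma eq_of_monic_dvd {K : Type*} [Field K] {p q : K[X]} (hp : p.Monic) (hq : q.Monic)
    (hdvd : p ∣ q) (hdeg : p.natDegree = q.natDegree) : p = q := by
  obtain ⟨c, rfl⟩ := hdvd
  have hc : c ≠ 0 := right_ne_zero_of_mul hq.ne_zero
  have hnd := natDegree_mul hp.ne_zero hc
  have hc0 : c.natDegree = 0 := by omega
  obtain ⟨u, rfl⟩ := natDegree_eq_zero.mp hc0
  have : u = 1 := by
    have := hq.leadingCoeff
    rwa [leadingCoeff_mul, hp.leadingCoeff, one_mul, leadingCoeff_C] at this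
  simp [this]

lemma exists_emb (a b a' b' : ℂ)
    (hia : IsIntegral ℚ a) (hib : IsIntegral ℚ b)
    (had : (minpoly ℚ a).natDegree = 2) (hbd : (minpoly ℚ b).natDegree = 3)
    (ha' : aeval a' (minpoly ℚ a) = 0) (hb' : aeval b' (minpoly ℚ b) = 0) :
    (finrank ℚ ℚ⟮a⟯⟮b⟯ = 6) ∧ ∃ ψ : ℚ⟮a⟯⟮b⟯ →ₐ[ℚ] ℂ,
      (∀ x : ℚ⟮a⟯⟮b⟯, (x:ℂ) = a → ψ x = a') ∧ (∀ x : ℚ⟮a⟯⟮b⟯, (x:ℂ) = b → ψ x = b') := by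
  set L := ℚ⟮a⟯ with hLdef
  haveI : FiniteDimensional ℚ L := adjoin.finiteDimensional hia
  have hL : finrank ℚ L = 2 := by rw [adjoin.finrank hia, had]
  have hibL : IsIntegral L b := hib.tower_top
  set M := L⟮b⟯ with hMdef
  haveI : FiniteDimensional L M := adjoin.finiteDimensional hibL
  haveI : FiniteDimensional ℚ M := FiniteDimensional.trans ℚ L M
  have haev : aeval b ((minpoly ℚ b).map (algebraMap ℚ L)) = 0 := by
    rw [aeval_map_algebraMap]; exact minpoly.aeval ℚ b
  have hdvd : minpoly L b ∣ (minpoly ℚ b).map (algebraMap ℚ L) := minpoly.dvd L b haev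
  have hmapne : ((minpoly ℚ b).map (algebraMap ℚ L)) ≠ 0 :=
    (Polynomial.map_ne_zero_iff (algebraMap ℚ L).injective).mpr (minpoly.ne_zero hib)
  have hdle : (minpoly L b).natDegree ≤ 3 := by
    have := natDegree_le_of_dvd hdvd hmapne
    rwa [natDegree_map, hbd] at this
  have hdpos : 0 < (minpoly L b).natDegree := minpoly.natDegree_pos hibL
  have hfM : finrank L M = (minpoly L b).natDegree := adjoin.finrank hibL
  have htower : finrank ℚ M = finrank ℚ L * finrank L M :=
    (Module.finrank_mul_finrank ℚ L M).symm
  have hbM : b ∈ M := subset_adjoin L {b} rfl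
  have h3 : (3:ℕ) ∣ finrank ℚ M := by
    have hmpeq : minpoly ℚ (⟨b, hbM⟩ : M) = minpoly ℚ b := by
      have h := minpoly.algebraMap_eq (A := ℚ) (algebraMap M ℂ).injective (⟨b, hbM⟩ : M)
      rw [show (algebraMap M ℂ) (⟨b, hbM⟩ : M) = b from rfl] at h; exact h.symm
    have hint : IsIntegral ℚ (⟨b, hbM⟩ : M) :=
      (isIntegral_algebraMap_iff (algebraMap M ℂ).injective).mp hib
    have hd := minpoly.degree_dvd hint
    rwa [hmpeq, hbd] at hd
  have hdeq : (minpoly L b).natDegree = 3 := by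
    rw [htower, hL, hfM] at h3
    omega
  have hfrank : finrank ℚ M = 6 := by rw [htower, hL, hfM, hdeq]
  refine ⟨hfrank, ?_⟩
  have hmbeq : minpoly L b = (minpoly ℚ b).map (algebraMap ℚ L) :=
    eq_of_monic_dvd (minpoly.monic hibL) ((minpoly.monic hib).map _) hdvd
      (by rw [natDegree_map, hbd, hdeq])
  have haroot : a' ∈ (minpoly ℚ a).aroots ℂ := by
    rw [mem_aroots]; exact ⟨minpoly.ne_zero hia, ha'⟩
  set φ₀ : L →ₐ[ℚ] ℂ := (algHomAdjoinIntegralEquiv ℚ hia).symm ⟨a', haroot⟩ with hphi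
  have hφ₀gen : φ₀ (AdjoinSimple.gen ℚ a) = a' :=
    algHomAdjoinIntegralEquiv_symm_apply_gen ℚ hia _
  have hcomp : (φ₀ : L →+* ℂ).comp (algebraMap ℚ L) = algebraMap ℚ ℂ :=
    RingHom.ext fun q => φ₀.commutes q
  have heval : eval₂ (φ₀ : L →+* ℂ) b' (minpoly L b) = 0 := by
    rw [hmbeq, eval₂_map, hcomp, ← aeval_def]
    exact hb'
  set e := adjoinRootEquivAdjoin L hibL with he
  set ψr : M →+* ℂ := (AdjoinRoot.lift (φ₀ : L →+* ℂ) b' heval).comp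
    e.symm.toAlgHom.toRingHom with hpsir
  have hcommL : ∀ y : L, ψr (algebraMap L M y) = φ₀ y := by
    intro y
    have h1 : e.symm (algebraMap L M y) = AdjoinRoot.of (minpoly L b) y := e.symm.commutes y
    simp only [hpsir, RingHom.comp_apply, AlgHom.toRingHom_eq_coe, AlgEquiv.toAlgHom_eq_coe,
      RingHom.coe_coe, AlgHom.coe_coe]
    change AdjoinRoot.lift (φ₀ : L →+* ℂ) b' heval (e.symm (algebraMap L M y)) = φ₀ y
    rw [h1, AdjoinRoot.lift_of]
    rfl
  have hcommQ : ∀ q : ℚ, ψr (algebraMap ℚ M q) = algebraMap ℚ ℂ q := by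
    intro q
    rw [IsScalarTower.algebraMap_apply ℚ L M q, hcommL, φ₀.commutes]
  set ψ : M →ₐ[ℚ] ℂ := { ψr with commutes' := hcommQ } with hψdef
  have hψr : ∀ x : M, ψ x = ψr x := fun _ => rfl
  refine ⟨ψ, ?_, ?_⟩
  · intro x hx
    have hx' : x = algebraMap L M (AdjoinSimple.gen ℚ a) := Subtype.ext hx
    rw [hψr, hx', hcommL]
    exact hφ₀gen
  · intro x hx
    have hx' : x = AdjoinSimple.gen L b := Subtype.ext hx
    rw [hψr, hx']
    have h2 : e.symm (AdjoinSimple.gen L b) = AdjoinRoot.root (minpoly L b) :=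
      adjoinRootEquivAdjoin_symm_apply_gen L hibL
    simp only [hpsir, RingHom.comp_apply, AlgHom.toRingHom_eq_coe, AlgEquiv.toAlgHom_eq_coe,
      RingHom.coe_coe, AlgHom.coe_coe]
    change AdjoinRoot.lift (φ₀ : L →+* ℂ) b' heval (e.symm (AdjoinSimple.gen L b)) = b'
    rw [h2, AdjoinRoot.lift_root]

lemma minpoly_of_int (r : Polynomial ℤ) (hm : r.Monic) (hi : Irreducible r) (z : ℂ)
    (hz : aeval z (r.map (Int.castRingHom ℚ)) = 0) :
    minpoly ℚ z = r.map (Int.castRingHom ℚ) := by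
  have hmq : (r.map (Int.castRingHom ℚ)).Monic := hm.map _
  have hirr : Irreducible (r.map (Int.castRingHom ℚ)) :=
    (Polynomial.IsPrimitive.Int.irreducible_iff_irreducible_map_cast hm.isPrimitive).mp hi
  exact (minpoly.eq_of_irreducible_of_monic hirr hz hmq).symm

lemma cast_comp_eq : (algebraMap ℚ ℂ).comp (Int.castRingHom ℚ) = Int.castRingHom ℂ := by
  ext1 n
  simp

lemma abs_cube_eq_one {x : ℝ} (h0 : 0 ≤ x) (h : x ^ 3 = 1) : x = 1 := by
  have h4 : (x - 1) * (x^2 + x + 1) = 0 := by linear_combination h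
  rcases mul_eq_zero.mp h4 with h5 | h5
  · linarith
  · nlinarith

lemma abs_sq_eq_one {x : ℝ} (h0 : 0 ≤ x) (h : x ^ 2 = 1) : x = 1 := by
  have h4 : (x - 1) * (x + 1) = 0 := by linear_combination h
  rcases mul_eq_zero.mp h4 with h5 | h5
  · linarith
  · nlinarith

lemma no_cross (c : ℚ) (hc : c = 1 ∨ c = -1) (a0 a1 v u w : ℂ)
    (hia : IsIntegral ℚ a0) (hib : IsIntegral ℚ v)
    (had : (minpoly ℚ a0).natDegree = 2) (hbd : (minpoly ℚ v).natDegree = 3)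
    (hprod : a0 * a1 = (c : ℂ))
    (hroots : ∀ z : ℂ, aeval z (minpoly ℚ v) = 0 ↔ (z = v ∨ z = u ∨ z = w))
    (hcube : v * u * w = 1 ∨ v * u * w = -1)
    (hvw : v ≠ w)
    (habs0 : ‖a0‖ ≠ 1) (habsv : ‖v‖ ≠ 1)
    (hEq : a0 * v = a1 * u) : False := by
  have hcne : (c : ℂ) ≠ 0 := by rcases hc with h | h <;> simp [h]
  have ha0 : a0 ≠ 0 := by rintro rfl; rw [zero_mul] at hprod; exact hcne hprod.symm
  have ha1 : a1 ≠ 0 := by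
    rintro rfl; rw [mul_zero] at hprod; exact hcne hprod.symm
  have hw0 : w ≠ 0 := by rintro rfl; rcases hcube with h | h <;> simp at h
  have hcc : (c : ℂ) * (c : ℂ) = 1 := by rcases hc with h | h <;> norm_num [h]
  set t : ℂ := (c : ℂ) * a0 * a0 with ht
  have htne : t ≠ 0 := by
    rw [ht]; exact mul_ne_zero (mul_ne_zero hcne ha0) ha0
  have hu : u = t * v := by
    have h1 : a1 * (t * v) = a1 * u := by
      calc a1 * (t * v) = (c : ℂ) * (a0 * a1) * (a0 * v) := by rw [ht]; ring
        _ = (c : ℂ) * (c : ℂ) * (a1 * u) := by rw [hprod, hEq]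
        _ = a1 * u := by rw [hcc]; ring
    exact (mul_left_cancel₀ ha1 h1).symm
  set K := ℚ⟮a0⟯⟮v⟯ with hK
  obtain ⟨-, ψ, hψa, hψb⟩ := exists_emb a0 v a0 w hia hib had hbd
    (minpoly.aeval ℚ a0) ((hroots w).mpr (Or.inr (Or.inr rfl)))
  have hvK : v ∈ K := subset_adjoin _ {v} rfl
  have ha0K : a0 ∈ K := by
    have := K.algebraMap_mem (AdjoinSimple.gen ℚ a0)
    simpa using this
  set A0 : K := ⟨a0, ha0K⟩ with hA0
  set V : K := ⟨v, hvK⟩ with hV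
  set x : K := algebraMap ℚ K c * A0 * A0 * V with hx
  have hcK : ((algebraMap ℚ K c : K) : ℂ) = (c : ℂ) := by
    rw [show ((algebraMap ℚ K c : K) : ℂ) = algebraMap K ℂ (algebraMap ℚ K c) from rfl,
      ← IsScalarTower.algebraMap_apply]
    exact (eq_ratCast (algebraMap ℚ ℂ) c)
  have hxcoe : (x : ℂ) = t * v := by
    rw [hx]
    push_cast
    rw [hcK, ht]
  have hψx : ψ x = t * w := by
    rw [hx]
    simp only [map_mul]
    rw [hψa A0 rfl, hψb V rfl, AlgHom.commutes]
    rw [ht, eq_ratCast (algebraMap ℚ ℂ) c]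
  have hxroot : aeval x (minpoly ℚ v) = 0 := by
    have h2 : aeval ((x : ℂ)) (minpoly ℚ v) = 0 := by
      rw [hxcoe, ← hu]; exact (hroots u).mpr (Or.inr (Or.inl rfl))
    apply (algebraMap K ℂ).injective
    rw [map_zero, ← aeval_algebraMap_apply]
    exact h2
  have hψroot : aeval (ψ x) (minpoly ℚ v) = 0 := by
    rw [aeval_algHom_apply, hxroot, map_zero]
  rw [hψx] at hψroot
  have habst : ‖t‖ = ‖a0‖ ^ 2 := by
    have habsc : ‖((c : ℂ))‖ = 1 := by rcases hc with h | h <;> norm_num [h]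
    rw [ht, norm_mul, norm_mul, habsc, one_mul, pow_two]
  have ht1 : t ≠ 1 := by
    intro h
    have h2 : ‖a0‖ ^ 2 = 1 := by rw [← habst, h, norm_one]
    exact habs0 (abs_sq_eq_one (norm_nonneg a0) h2)
  rcases (hroots (t * w)).mp hψroot with h | h | h
  · have h9 : v * u * w = v * v * v := by
      calc v * u * w = v * v * (t * w) := by rw [hu]; ring
        _ = v * v * v := by rw [h]
    have habsv3 : ‖v‖ ^ 3 = 1 := by
      have h10 : ‖v * u * w‖ = 1 := by
        rcases hcube with h' | h' <;> rw [h'] <;> simp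
      rw [h9, norm_mul, norm_mul] at h10
      rw [pow_succ, pow_two]
      linarith [h10]
    exact habsv (abs_cube_eq_one (norm_nonneg v) habsv3)
  · rw [hu] at h
    exact hvw (mul_left_cancel₀ htne h).symm
  · have h11 : t * w = 1 * w := by rw [h, one_mul]
    exact ht1 (mul_right_cancel₀ hw0 h11)

lemma pair_ne (a b : ℂ) (h : ((X - C a) * (X - C b)).Separable) : a ≠ b := by
  have hnd := nodup_roots h
  rw [roots_mul (mul_ne_zero (X_sub_C_ne_zero a) (X_sub_C_ne_zero b)),
    roots_X_sub_C, roots_X_sub_C] at hnd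
  simpa using hnd

lemma triple_ne (a b c : ℂ) (h : ((X - C a) * (X - C b) * (X - C c)).Separable) :
    a ≠ b ∧ a ≠ c ∧ b ≠ c := by
  have hnd := nodup_roots h
  rw [roots_mul (mul_ne_zero (mul_ne_zero (X_sub_C_ne_zero a) (X_sub_C_ne_zero b))
      (X_sub_C_ne_zero c)),
    roots_mul (mul_ne_zero (X_sub_C_ne_zero a) (X_sub_C_ne_zero b)),
    roots_X_sub_C, roots_X_sub_C, roots_X_sub_C] at hnd
  simp [Multiset.singleton_add] at hnd
  tauto

lemma quad_coeff0 (a b : ℂ) : ((X - C a) * (X - C b)).coeff 0 = a * b := by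
  rw [show (X - C a) * (X - C b) = X^2 - C (a+b) * X + C (a*b) from by simp only [C_add, C_mul]; ring]
  simp

lemma cube_coeff0 (a b c : ℂ) :
    ((X - C a) * (X - C b) * (X - C c)).coeff 0 = -(a*b*c) := by
  rw [show (X - C a) * (X - C b) * (X - C c)
      = X^3 - C (a+b+c)*X^2 + C (a*b+a*c+b*c)*X - C (a*b*c) from by simp only [C_add, C_mul]; ring]
  simp

lemma or_acb {a b c : Prop} : (a ∨ b ∨ c) ↔ (a ∨ c ∨ b) := by tauto
lemma or_bac {a b c : Prop} : (a ∨ b ∨ c) ↔ (b ∨ a ∨ c) := by tauto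
lemma or_bca {a b c : Prop} : (a ∨ b ∨ c) ↔ (b ∨ c ∨ a) := by tauto
lemma or_cab {a b c : Prop} : (a ∨ b ∨ c) ↔ (c ∨ a ∨ b) := by tauto
lemma or_cba {a b c : Prop} : (a ∨ b ∨ c) ↔ (c ∨ b ∨ a) := by tauto


/-- Let `r₁, r₂ ∈ ℤ[x]` be a monic irreducible quadratic and a monic irreducible
cubic, each with constant term `±1` and no roots of modulus one, with roots
`α₀,α₁` and `α₂,α₃,α₄` respectively.  Then `α₀α₂` has degree `6` over `ℚ`; hence
the sextic `r₁∧r₂(x) = ∏_{i∈{0,1}, j∈{2,3,4}}(x - αᵢαⱼ)` is irreducible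
over `ℚ`. -/
theorem stmt_19 (r₁ r₂ : Polynomial ℤ)
    (h₁m : r₁.Monic) (h₁i : Irreducible r₁) (h₁d : r₁.natDegree = 2)
    (h₁c : r₁.coeff 0 = 1 ∨ r₁.coeff 0 = -1)
    (h₂m : r₂.Monic) (h₂i : Irreducible r₂) (h₂d : r₂.natDegree = 3)
    (h₂c : r₂.coeff 0 = 1 ∨ r₂.coeff 0 = -1)
    (α : Fin 5 → ℂ)
    (h₁r : r₁.map (Int.castRingHom ℂ) = (X - C (α 0)) * (X - C (α 1)))
    (h₂r : r₂.map (Int.castRingHom ℂ)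
      = (X - C (α 2)) * (X - C (α 3)) * (X - C (α 4)))
    (habs : ∀ i, ‖α i‖ ≠ 1) :
    (minpoly ℚ (α 0 * α 2)).natDegree = 6 ∧
    ∀ q : Polynomial ℚ,
      q.map (algebraMap ℚ ℂ)
        = ∏ i ∈ ({0, 1} : Finset (Fin 5)), ∏ j ∈ ({2, 3, 4} : Finset (Fin 5)),
            (X - C (α i * α j)) →
      Irreducible q := by
  have hp₁ℂ : (r₁.map (Int.castRingHom ℚ)).map (algebraMap ℚ ℂ)
      = (X - C (α 0)) * (X - C (α 1)) := by
    rw [Polynomial.map_map, cast_comp_eq, h₁r]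
  have hp₂ℂ : (r₂.map (Int.castRingHom ℚ)).map (algebraMap ℚ ℂ)
      = (X - C (α 2)) * (X - C (α 3)) * (X - C (α 4)) := by
    rw [Polynomial.map_map, cast_comp_eq, h₂r]
  set p₁ : Polynomial ℚ := r₁.map (Int.castRingHom ℚ) with hp₁def
  set p₂ : Polynomial ℚ := r₂.map (Int.castRingHom ℚ) with hp₂def
  have hp₁m : p₁.Monic := h₁m.map _
  have hp₂m : p₂.Monic := h₂m.map _
  have hp₁d : p₁.natDegree = 2 := by rw [hp₁def, h₁m.natDegree_map]; exact h₁d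
  have hp₂d : p₂.natDegree = 3 := by rw [hp₂def, h₂m.natDegree_map]; exact h₂d
  have hr1root : ∀ i : Fin 5, i = 0 ∨ i = 1 → aeval (α i) p₁ = 0 := by
    intro i hi
    rw [aeval_def, ← eval_map, hp₁ℂ]
    rcases hi with rfl | rfl <;> simp
  have hr2root : ∀ j : Fin 5, j = 2 ∨ j = 3 ∨ j = 4 → aeval (α j) p₂ = 0 := by
    intro j hj
    rw [aeval_def, ← eval_map, hp₂ℂ]
    rcases hj with rfl | rfl | rfl <;> simp
  have hmin1 : ∀ i : Fin 5, i = 0 ∨ i = 1 → minpoly ℚ (α i) = p₁ :=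
    fun i hi => minpoly_of_int r₁ h₁m h₁i (α i) (hr1root i hi)
  have hmin2 : ∀ j : Fin 5, j = 2 ∨ j = 3 ∨ j = 4 → minpoly ℚ (α j) = p₂ :=
    fun j hj => minpoly_of_int r₂ h₂m h₂i (α j) (hr2root j hj)
  have hint1 : ∀ i : Fin 5, i = 0 ∨ i = 1 → IsIntegral ℚ (α i) :=
    fun i hi => ⟨p₁, hp₁m, by rw [← aeval_def]; exact hr1root i hi⟩
  have hint2 : ∀ j : Fin 5, j = 2 ∨ j = 3 ∨ j = 4 → IsIntegral ℚ (α j) :=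
    fun j hj => ⟨p₂, hp₂m, by rw [← aeval_def]; exact hr2root j hj⟩
  have hirr1 : Irreducible p₁ :=
    (Polynomial.IsPrimitive.Int.irreducible_iff_irreducible_map_cast h₁m.isPrimitive).mp h₁i
  have hirr2 : Irreducible p₂ :=
    (Polynomial.IsPrimitive.Int.irreducible_iff_irreducible_map_cast h₂m.isPrimitive).mp h₂i
  have hne01 : α 0 ≠ α 1 := pair_ne _ _ (hp₁ℂ ▸ hirr1.separable.map)
  obtain ⟨hne23, hne24, hne34⟩ :=
    triple_ne _ _ _ (hp₂ℂ ▸ hirr2.separable.map)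
  -- constant coefficients
  have hc1 : α 0 * α 1 = (((r₁.coeff 0 : ℚ)) : ℂ) := by
    have h : (r₁.map (Int.castRingHom ℂ)).coeff 0 = α 0 * α 1 := by
      rw [h₁r, quad_coeff0]
    rw [coeff_map, eq_intCast] at h
    rw [← h]
    push_cast
    ring
  have hc1q : (r₁.coeff 0 : ℚ) = 1 ∨ (r₁.coeff 0 : ℚ) = -1 := by
    rcases h₁c with h | h <;> [left; right] <;> rw [h] <;> norm_num
  have hprod234 : α 2 * α 3 * α 4 = 1 ∨ α 2 * α 3 * α 4 = -1 := by
    have h : (r₂.map (Int.castRingHom ℂ)).coeff 0 = -(α 2 * α 3 * α 4) := by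
      rw [h₂r, cube_coeff0]
    rw [coeff_map, eq_intCast] at h
    rcases h₂c with h2 | h2
    · right; rw [h2] at h; push_cast at h; linear_combination h
    · left; rw [h2] at h; push_cast at h; linear_combination h
  have hcne : (((r₁.coeff 0 : ℚ)) : ℂ) ≠ 0 := by
    rcases hc1q with h | h <;> rw [h] <;> norm_num
  have hz0 : α 0 ≠ 0 := fun h => hcne (by rw [← hc1, h, zero_mul])
  have hz1 : α 1 ≠ 0 := fun h => hcne (by rw [← hc1, h, mul_zero])
  have hprodne : α 2 * α 3 * α 4 ≠ 0 := by
    rcases hprod234 with h | h <;> rw [h] <;> norm_num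
  have hz2 : α 2 ≠ 0 := fun h => hprodne (by rw [h]; ring)
  have hz3 : α 3 ≠ 0 := fun h => hprodne (by rw [h]; ring)
  have hz4 : α 4 ≠ 0 := fun h => hprodne (by rw [h]; ring)
  have hd0 : (minpoly ℚ (α 0)).natDegree = 2 := by
    rw [hmin1 0 (Or.inl rfl)]; exact hp₁d
  have hd2 : (minpoly ℚ (α 2)).natDegree = 3 := by
    rw [hmin2 2 (Or.inl rfl)]; exact hp₂d
  have hd3 : (minpoly ℚ (α 3)).natDegree = 3 := by
    rw [hmin2 3 (Or.inr (Or.inl rfl))]; exact hp₂d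
  have hd4 : (minpoly ℚ (α 4)).natDegree = 3 := by
    rw [hmin2 4 (Or.inr (Or.inr rfl))]; exact hp₂d
  have hroots2 : ∀ z : ℂ, aeval z p₂ = 0 ↔ (z = α 2 ∨ z = α 3 ∨ z = α 4) := by
    intro z
    rw [aeval_def, ← eval_map, hp₂ℂ]
    simp [mul_eq_zero, sub_eq_zero, or_assoc]
  -- the six cross inequalities
  have X23 : α 0 * α 2 ≠ α 1 * α 3 := fun h =>
    no_cross (r₁.coeff 0 : ℚ) hc1q (α 0) (α 1) (α 2) (α 3) (α 4)
      (hint1 0 (Or.inl rfl)) (hint2 2 (Or.inl rfl)) hd0 hd2 hc1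
      (fun z => by rw [hmin2 2 (Or.inl rfl), hroots2 z])
      (by rw [show α 2 * α 3 * α 4 = α 2 * α 3 * α 4 from rfl]; exact hprod234)
      hne24 (habs 0) (habs 2) h
  have X24 : α 0 * α 2 ≠ α 1 * α 4 := fun h =>
    no_cross (r₁.coeff 0 : ℚ) hc1q (α 0) (α 1) (α 2) (α 4) (α 3)
      (hint1 0 (Or.inl rfl)) (hint2 2 (Or.inl rfl)) hd0 hd2 hc1
      (fun z => by rw [hmin2 2 (Or.inl rfl)]; exact (hroots2 z).trans or_acb)
      (by rw [show α 2 * α 4 * α 3 = α 2 * α 3 * α 4 from by ring]; exact hprod234)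
      hne23 (habs 0) (habs 2) h
  have X32 : α 0 * α 3 ≠ α 1 * α 2 := fun h =>
    no_cross (r₁.coeff 0 : ℚ) hc1q (α 0) (α 1) (α 3) (α 2) (α 4)
      (hint1 0 (Or.inl rfl)) (hint2 3 (Or.inr (Or.inl rfl))) hd0 hd3 hc1
      (fun z => by rw [hmin2 3 (Or.inr (Or.inl rfl))]; exact (hroots2 z).trans or_bac)
      (by rw [show α 3 * α 2 * α 4 = α 2 * α 3 * α 4 from by ring]; exact hprod234)
      hne34 (habs 0) (habs 3) h
  have X34 : α 0 * α 3 ≠ α 1 * α 4 := fun h =>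
    no_cross (r₁.coeff 0 : ℚ) hc1q (α 0) (α 1) (α 3) (α 4) (α 2)
      (hint1 0 (Or.inl rfl)) (hint2 3 (Or.inr (Or.inl rfl))) hd0 hd3 hc1
      (fun z => by rw [hmin2 3 (Or.inr (Or.inl rfl))]; exact (hroots2 z).trans or_bca)
      (by rw [show α 3 * α 4 * α 2 = α 2 * α 3 * α 4 from by ring]; exact hprod234)
      hne23.symm (habs 0) (habs 3) h
  have X42 : α 0 * α 4 ≠ α 1 * α 2 := fun h =>
    no_cross (r₁.coeff 0 : ℚ) hc1q (α 0) (α 1) (α 4) (α 2) (α 3)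
      (hint1 0 (Or.inl rfl)) (hint2 4 (Or.inr (Or.inr rfl))) hd0 hd4 hc1
      (fun z => by rw [hmin2 4 (Or.inr (Or.inr rfl))]; exact (hroots2 z).trans or_cab)
      (by rw [show α 4 * α 2 * α 3 = α 2 * α 3 * α 4 from by ring]; exact hprod234)
      hne34.symm (habs 0) (habs 4) h
  have X43 : α 0 * α 4 ≠ α 1 * α 3 := fun h =>
    no_cross (r₁.coeff 0 : ℚ) hc1q (α 0) (α 1) (α 4) (α 3) (α 2)
      (hint1 0 (Or.inl rfl)) (hint2 4 (Or.inr (Or.inr rfl))) hd0 hd4 hc1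
      (fun z => by rw [hmin2 4 (Or.inr (Or.inr rfl))]; exact (hroots2 z).trans or_cba)
      (by rw [show α 4 * α 3 * α 2 = α 2 * α 3 * α 4 from by ring]; exact hprod234)
      hne24.symm (habs 0) (habs 4) h
  -- the compositum
  have hvK : α 2 ∈ ℚ⟮α 0⟯⟮α 2⟯ := subset_adjoin _ {α 2} rfl
  have ha0K : α 0 ∈ ℚ⟮α 0⟯⟮α 2⟯ := by
    simpa using (ℚ⟮α 0⟯⟮α 2⟯).algebraMap_mem (AdjoinSimple.gen ℚ (α 0))
  have hβint : IsIntegral ℚ (α 0 * α 2) :=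
    (hint1 0 (Or.inl rfl)).mul (hint2 2 (Or.inl rfl))
  have hconj : ∀ i : Fin 5, (i = 0 ∨ i = 1) → ∀ j : Fin 5, (j = 2 ∨ j = 3 ∨ j = 4) →
      aeval (α i * α j) (minpoly ℚ (α 0 * α 2)) = 0 := by
    intro i hi j hj
    obtain ⟨-, ψ, hψa, hψb⟩ := exists_emb (α 0) (α 2) (α i) (α j)
      (hint1 0 (Or.inl rfl)) (hint2 2 (Or.inl rfl)) hd0 hd2
      (by rw [hmin1 0 (Or.inl rfl)]; exact hr1root i hi)
      (by rw [hmin2 2 (Or.inl rfl)]; exact hr2root j hj)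
    set x : ℚ⟮α 0⟯⟮α 2⟯ := ⟨α 0, ha0K⟩ * ⟨α 2, hvK⟩ with hx
    have hxc : algebraMap (ℚ⟮α 0⟯⟮α 2⟯) ℂ x = α 0 * α 2 := rfl
    have hxroot : aeval x (minpoly ℚ (α 0 * α 2)) = 0 := by
      apply (algebraMap (ℚ⟮α 0⟯⟮α 2⟯) ℂ).injective
      rw [map_zero, ← aeval_algebraMap_apply, hxc]
      exact minpoly.aeval ℚ (α 0 * α 2)
    have h5 := aeval_algHom_apply ψ x (minpoly ℚ (α 0 * α 2))
    rw [hxroot, map_zero, hx, map_mul, hψa _ rfl, hψb _ rfl] at h5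
    exact h5
  haveI hFD1 : FiniteDimensional ℚ ℚ⟮α 0⟯ :=
    adjoin.finiteDimensional (hint1 0 (Or.inl rfl))
  haveI hFD2 : FiniteDimensional (ℚ⟮α 0⟯) (ℚ⟮α 0⟯⟮α 2⟯) :=
    adjoin.finiteDimensional ((hint2 2 (Or.inl rfl)).tower_top)
  haveI hFD : FiniteDimensional ℚ (ℚ⟮α 0⟯⟮α 2⟯) :=
    FiniteDimensional.trans ℚ (ℚ⟮α 0⟯) (ℚ⟮α 0⟯⟮α 2⟯)
  obtain ⟨hfr6, -⟩ := exists_emb (α 0) (α 2) (α 0) (α 2) (hint1 0 (Or.inl rfl))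
    (hint2 2 (Or.inl rfl)) hd0 hd2 (minpoly.aeval ℚ _) (minpoly.aeval ℚ _)
  have hle : (minpoly ℚ (α 0 * α 2)).natDegree ≤ 6 := by
    have h1 : minpoly ℚ ((⟨α 0, ha0K⟩ * ⟨α 2, hvK⟩ : ℚ⟮α 0⟯⟮α 2⟯)) = minpoly ℚ (α 0 * α 2) := by
      have h2 := minpoly.algebraMap_eq (A := ℚ)
        (algebraMap (ℚ⟮α 0⟯⟮α 2⟯) ℂ).injective
        ((⟨α 0, ha0K⟩ * ⟨α 2, hvK⟩ : ℚ⟮α 0⟯⟮α 2⟯))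
      rw [show (algebraMap (ℚ⟮α 0⟯⟮α 2⟯) ℂ) (⟨α 0, ha0K⟩ * ⟨α 2, hvK⟩ : ℚ⟮α 0⟯⟮α 2⟯)
        = α 0 * α 2 from rfl] at h2
      exact h2.symm
    have h3 := minpoly.natDegree_le (A := ℚ) ((⟨α 0, ha0K⟩ * ⟨α 2, hvK⟩ : ℚ⟮α 0⟯⟮α 2⟯))
    rwa [h1, hfr6] at h3
  have hge : 6 ≤ (minpoly ℚ (α 0 * α 2)).natDegree := by
    set m := minpoly ℚ (α 0 * α 2) with hm
    have hmne : m.map (algebraMap ℚ ℂ) ≠ 0 :=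
      (Polynomial.map_ne_zero_iff (algebraMap ℚ ℂ).injective).mpr (minpoly.ne_zero hβint)
    set S : Finset ℂ := (({0,1} : Finset (Fin 5)) ×ˢ ({2,3,4} : Finset (Fin 5))).image
        (fun p => α p.1 * α p.2) with hS
    have hsub : S ⊆ (m.map (algebraMap ℚ ℂ)).roots.toFinset := by
      intro z hzS
      rw [hS, Finset.mem_image] at hzS
      obtain ⟨p, hp, rfl⟩ := hzS
      rw [Finset.mem_product] at hp
      rw [Multiset.mem_toFinset, mem_roots']
      refine ⟨hmne, ?_⟩
      rw [IsRoot.def, eval_map, ← aeval_def]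
      apply hconj p.1 ?_ p.2 ?_
      · simpa using hp.1
      · simpa using hp.2
    have hinj : Set.InjOn (fun p : Fin 5 × Fin 5 => α p.1 * α p.2)
        ↑(({0,1} : Finset (Fin 5)) ×ˢ ({2,3,4} : Finset (Fin 5))) := by
      rintro ⟨i, j⟩ hp ⟨i', j'⟩ hq h
      simp only [Finset.coe_product, Set.mem_prod, Finset.mem_coe, Finset.mem_insert,
        Finset.mem_singleton] at hp hq
      obtain ⟨h1, h2⟩ := hp
      obtain ⟨h3, h4⟩ := hq
      dsimp only at h
      rcases h1 with rfl | rfl <;> rcases h2 with rfl | rfl | rfl <;>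
        rcases h3 with rfl | rfl <;> rcases h4 with rfl | rfl | rfl <;>
        first
          | rfl
          | (exfalso;
             first
               | exact hne23 (mul_left_cancel₀ hz0 h)
               | exact hne24 (mul_left_cancel₀ hz0 h)
               | exact hne34 (mul_left_cancel₀ hz0 h)
               | exact hne23 (mul_left_cancel₀ hz1 h)
               | exact hne24 (mul_left_cancel₀ hz1 h)
               | exact hne34 (mul_left_cancel₀ hz1 h)
               | exact hne23 (mul_left_cancel₀ hz0 h.symm)
               | exact hne24 (mul_left_cancel₀ hz0 h.symm)
               | exact hne34 (mul_left_cancel₀ hz0 h.symm)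
               | exact hne23 (mul_left_cancel₀ hz1 h.symm)
               | exact hne24 (mul_left_cancel₀ hz1 h.symm)
               | exact hne34 (mul_left_cancel₀ hz1 h.symm)
               | exact hne01 (mul_right_cancel₀ hz2 h)
               | exact hne01 (mul_right_cancel₀ hz3 h)
               | exact hne01 (mul_right_cancel₀ hz4 h)
               | exact hne01 (mul_right_cancel₀ hz2 h.symm)
               | exact hne01 (mul_right_cancel₀ hz3 h.symm)
               | exact hne01 (mul_right_cancel₀ hz4 h.symm)
               | exact X23 h | exact X24 h | exact X32 h | exact X34 h
               | exact X42 h | exact X43 h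
               | exact X23 h.symm | exact X24 h.symm | exact X32 h.symm
               | exact X34 h.symm | exact X42 h.symm | exact X43 h.symm)
    have hcardS : S.card = 6 := by
      rw [hS, Finset.card_image_of_injOn hinj]
      decide
    calc (6:ℕ) = S.card := hcardS.symm
      _ ≤ (m.map (algebraMap ℚ ℂ)).roots.toFinset.card := Finset.card_le_card hsub
      _ ≤ Multiset.card (m.map (algebraMap ℚ ℂ)).roots := Multiset.toFinset_card_le _
      _ ≤ (m.map (algebraMap ℚ ℂ)).natDegree := card_roots' _
      _ = m.natDegree := natDegree_map _
  refine ⟨le_antisymm hle hge, ?_⟩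
  intro q hq
  have hPmonic : (∏ i ∈ ({0,1} : Finset (Fin 5)), ∏ j ∈ ({2,3,4} : Finset (Fin 5)),
      (X - C (α i * α j))).Monic :=
    monic_prod_of_monic _ _ fun i _ =>
      monic_prod_of_monic _ _ fun j _ => monic_X_sub_C _
  have hqmonic : q.Monic := by
    apply monic_of_injective (algebraMap ℚ ℂ).injective
    rw [hq]; exact hPmonic
  have hqdeg : q.natDegree = 6 := by
    have h1 : (q.map (algebraMap ℚ ℂ)).natDegree = 6 := by
      rw [hq, natDegree_prod_of_monic _ _
        (fun i _ => monic_prod_of_monic _ _ fun j _ => monic_X_sub_C _)]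
      have h2 : ∀ i : Fin 5, (∏ j ∈ ({2,3,4} : Finset (Fin 5)),
          (X - C (α i * α j))).natDegree = 3 := by
        intro i
        rw [natDegree_prod_of_monic _ _ (fun j _ => monic_X_sub_C _)]
        simp only [natDegree_X_sub_C]
        decide
      simp only [h2]
      decide
    rwa [natDegree_map] at h1
  have haevq : aeval (α 0 * α 2) q = 0 := by
    rw [aeval_def, ← eval_map, hq, eval_prod]
    apply Finset.prod_eq_zero (show (0:Fin 5) ∈ ({0,1} : Finset (Fin 5)) by decide)
    rw [eval_prod]
    apply Finset.prod_eq_zero (show (2:Fin 5) ∈ ({2,3,4} : Finset (Fin 5)) by decide)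
    simp
  have hdvd := minpoly.dvd ℚ _ haevq
  have heqq : minpoly ℚ (α 0 * α 2) = q :=
    eq_of_monic_dvd (minpoly.monic hβint) hqmonic hdvd
      (by rw [le_antisymm hle hge, hqdeg])
  rw [← heqq]
  exact minpoly.irreducible hβint

end
end
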